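/- Noninterference for IKC extended with Booleans: for every closed term · ⊢ f : □Bool ⟶ Bool of IKC^Bool and any two closed terms · ⊢ s₁, s₂ : □Bool, it holds that app(f, s₁) ≈ app(f, s₂) in the equational theory of IKC^Bool. -/

import Mathlib

namespace IKC

/-- Types of IKC^Bool: base type ι, functions, box, Booleans. -/
inductive Ty : Type
  | base : Ty
  | arr : Ty → Ty → Ty
  | box : Ty → Ty
  | bool : Ty

/-- Typing contexts: empty, extension by a type, extension by a lock 🔒. -/
inductive Cx : Type
  | nil : Cx
  | snoc : Cx → Ty → Cx
  | lock : Cx → Cx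

/-- IKC modal accessibility relation Δ ◁ Γ: Γ = Δ,🔒,Δ' with Δ' lock-free. -/
inductive Ext : Cx → Cx → Type
  | nil : Ext Γ (.lock Γ)
  | var : Ext Δ Γ → Ext Δ (.snoc Γ A)

/-- General context extensions Γ ++ Γ' (by variables and locks), used in the
elimination rule for Bool. -/
inductive GExt : Cx → Cx → Type
  | nil : GExt Γ Γ
  | var : GExt Δ Γ → GExt Δ (.snoc Γ A)
  | lock : GExt Δ Γ → GExt Δ (.lock Γ)

/-- Transitivity of general context extensions. -/
def transG : {Δ Γ Θ : Cx} → GExt Δ Γ → GExt Γ Θ → GExt Δ Θ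
  | _, _, _, g, .nil => g
  | _, _, _, g, .var g' => .var (transG g g')
  | _, _, _, g, .lock g' => .lock (transG g g')

/-- A modal accessibility proof is in particular a general extension. -/
def extToG : {Δ Γ : Cx} → Ext Δ Γ → GExt Δ Γ
  | _, _, .nil => .lock .nil
  | _, _, .var e => .var (extToG e)

/-- Order-preserving embeddings Γ ≤ Γ'. -/
inductive Ope : Cx → Cx → Type
  | base : Ope .nil .nil
  | drop : Ope Γ Γ' → Ope Γ (.snoc Γ' A)
  | keep : Ope Γ Γ' → Ope (.snoc Γ A) (.snoc Γ' A)
  | keepLock : Ope Γ Γ' → Ope (.lock Γ) (.lock Γ')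

/-- Identity OPE. -/
def idOpe : (Γ : Cx) → Ope Γ Γ
  | .nil => .base
  | .snoc Γ _ => .keep (idOpe Γ)
  | .lock Γ => .keepLock (idOpe Γ)

/-- De Bruijn variables (no rule through locks). -/
inductive Var : Cx → Ty → Type
  | zero : Var (.snoc Γ A) A
  | succ : Var Γ A → Var (.snoc Γ B) A

/-- Intrinsically-typed terms of IKC^Bool: IKC extended with true, false and
an if-then-else eliminator whose branches and conclusion may live in an
extension Γ ++ Γ' of the scrutinee's context Γ. -/
inductive Tm : Cx → Ty → Type
  | var : Var Γ A → Tm Γ A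
  | lam : Tm (.snoc Γ A) B → Tm Γ (.arr A B)
  | app : Tm Γ (.arr A B) → Tm Γ A → Tm Γ B
  | box : Tm (.lock Γ) A → Tm Γ (.box A)
  | unbox : Tm Δ (.box A) → Ext Δ Γ → Tm Γ A
  | tt : Tm Γ .bool
  | ff : Tm Γ .bool
  | ite : GExt Γ Θ → Tm Γ .bool → Tm Θ A → Tm Θ A → Tm Θ A

/-- Factorization of e : Δ ◁ Γ along an OPE o : Γ ≤ Γ'. -/
def factor : {Δ Γ Γ' : Cx} → Ext Δ Γ → Ope Γ Γ' → (Δ' : Cx) × Ope Δ Δ' × Ext Δ' Γ'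
  | _, _, _, e, .drop o =>
    let f := factor e o
    ⟨f.1, f.2.1, .var f.2.2⟩
  | _, _, _, .nil, .keepLock o => ⟨_, o, .nil⟩
  | _, _, _, .var e, .keep o =>
    let f := factor e o
    ⟨f.1, f.2.1, .var f.2.2⟩

/-- Factorization of a general extension along an OPE. -/
def factorG : {Δ Γ Γ' : Cx} → GExt Δ Γ → Ope Γ Γ' → (Δ' : Cx) × Ope Δ Δ' × GExt Δ' Γ'
  | _, _, _, g, .drop o =>
    let f := factorG g o
    ⟨f.1, f.2.1, .var f.2.2⟩
  | _, _, _, .nil, o => ⟨_, o, .nil⟩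
  | _, _, _, .var g, .keep o =>
    let f := factorG g o
    ⟨f.1, f.2.1, .var f.2.2⟩
  | _, _, _, .lock g, .keepLock o =>
    let f := factorG g o
    ⟨f.1, f.2.1, .lock f.2.2⟩

/-- An accessibility proof e : Δ ◁ Γ yields an OPE Δ,🔒 ≤ Γ. -/
def factorOpe : {Δ Γ : Cx} → Ext Δ Γ → Ope (.lock Δ) Γ
  | _, _, .nil => idOpe _
  | _, _, .var e => .drop (factorOpe e)

/-- Weakening of variables along an OPE. -/
def wkVar : {Γ Γ' : Cx} → Ope Γ Γ' → Var Γ A → Var Γ' A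
  | _, _, .drop o, v => .succ (wkVar o v)
  | _, _, .keep _, .zero => .zero
  | _, _, .keep o, .succ v => .succ (wkVar o v)

/-- Weakening (renaming) of terms along an OPE. -/
def wkTm : {Γ Γ' : Cx} → Ope Γ Γ' → Tm Γ A → Tm Γ' A
  | _, _, o, .var v => .var (wkVar o v)
  | _, _, o, .lam t => .lam (wkTm (.keep o) t)
  | _, _, o, .app t u => .app (wkTm o t) (wkTm o u)
  | _, _, o, .box t => .box (wkTm (.keepLock o) t)
  | _, _, o, .unbox t e => .unbox (wkTm (factor e o).2.1 t) (factor e o).2.2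
  | _, _, _, .tt => .tt
  | _, _, _, .ff => .ff
  | _, _, o, .ite g b t₁ t₂ =>
      .ite (factorG g o).2.2 (wkTm (factorG g o).2.1 b) (wkTm o t₁) (wkTm o t₂)

/-- Substitutions Γ ⊢ˢ s : Δ. -/
inductive Sub : Cx → Cx → Type
  | empty : Sub Γ .nil
  | snoc : Sub Γ Δ → Tm Γ A → Sub Γ (.snoc Δ A)
  | lock : Sub Θ Δ → Ext Θ Γ → Sub Γ (.lock Δ)

/-- Weakening of substitutions along an OPE. -/
def wkSub : {Γ Γ' Δ : Cx} → Ope Γ Γ' → Sub Γ Δ → Sub Γ' Δ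
  | _, _, _, _, .empty => .empty
  | _, _, _, o, .snoc s t => .snoc (wkSub o s) (wkTm o t)
  | _, _, _, o, .lock s e => .lock (wkSub (factor e o).2.1 s) (factor e o).2.2

/-- Identity substitution. -/
def idSub : (Γ : Cx) → Sub Γ Γ
  | .nil => .empty
  | .snoc Γ _ => .snoc (wkSub (.drop (idOpe Γ)) (idSub Γ)) (.var .zero)
  | .lock Γ => .lock (idSub Γ) .nil

/-- Action of a substitution on a variable. -/
def substVar : {Γ Δ : Cx} → Sub Γ Δ → Var Δ A → Tm Γ A
  | _, _, .snoc _ t, .zero => t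
  | _, _, .snoc s _, .succ v => substVar s v

/-- Trimming a substitution along the modal accessibility relation. -/
def trimSub : {Γ Δ Θ : Cx} → Sub Γ Δ → Ext Θ Δ → (Θ' : Cx) × Sub Θ' Θ × Ext Θ' Γ
  | _, _, _, .lock s e, .nil => ⟨_, s, e⟩
  | _, _, _, .snoc s _, .var e => trimSub s e

/-- Trimming a substitution along a general extension. -/
def trimG : {Γ' Θ Γ : Cx} → Sub Γ' Θ → GExt Γ Θ → (Γ₀ : Cx) × Sub Γ₀ Γ × GExt Γ₀ Γ'
  | Γ', _, _, s, .nil => ⟨Γ', s, .nil⟩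
  | _, _, _, .snoc s _, .var g => trimG s g
  | _, _, _, .lock s e, .lock g =>
    let f := trimG s g
    ⟨f.1, f.2.1, transG f.2.2 (extToG e)⟩

/-- Application of a substitution to a term. -/
def subst : {Γ Δ : Cx} → Sub Γ Δ → Tm Δ A → Tm Γ A
  | _, _, s, .var v => substVar s v
  | _, _, s, .lam t => .lam (subst (.snoc (wkSub (.drop (idOpe _)) s) (.var .zero)) t)
  | _, _, s, .app t u => .app (subst s t) (subst s u)
  | _, _, s, .box t => .box (subst (.lock s .nil) t)
  | _, _, s, .unbox t e => .unbox (subst (trimSub s e).2.1 t) (trimSub s e).2.2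
  | _, _, _, .tt => .tt
  | _, _, _, .ff => .ff
  | _, _, s, .ite g b t₁ t₂ =>
      .ite (trimG s g).2.2 (subst (trimG s g).2.1 b) (subst s t₁) (subst s t₂)

/-- The equational theory ≈ of IKC^Bool: the rules of IKC, the βη-rules for
Bool, and commuting conversions for the eliminators over if-then-else. -/
inductive Conv : {Γ : Cx} → {A : Ty} → Tm Γ A → Tm Γ A → Prop
  | refl (t : Tm Γ A) : Conv t t
  | symm : Conv t u → Conv u t
  | trans : Conv t u → Conv u v → Conv t v
  | congLam : Conv t t' → Conv (.lam t) (.lam t')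
  | congApp : Conv t t' → Conv u u' → Conv (.app t u) (.app t' u')
  | congBox : Conv t t' → Conv (.box t) (.box t')
  | congUnbox {t t' : Tm Δ (.box A)} {e : Ext Δ Γ} :
      Conv t t' → Conv (.unbox t e) (.unbox t' e)
  | congIte {g : GExt Γ Θ} {b b' : Tm Γ .bool} {t₁ t₁' t₂ t₂' : Tm Θ A} :
      Conv b b' → Conv t₁ t₁' → Conv t₂ t₂' →
      Conv (.ite g b t₁ t₂) (.ite g b' t₁' t₂')
  | betaFun (t : Tm (.snoc Γ A) B) (u : Tm Γ A) :
      Conv (.app (.lam t) u) (subst (.snoc (idSub Γ) u) t)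
  | etaFun (t : Tm Γ (.arr A B)) :
      Conv t (.lam (.app (wkTm (.drop (idOpe Γ)) t) (.var .zero)))
  | betaBox (t : Tm (.lock Δ) A) (e : Ext Δ Γ) :
      Conv (.unbox (.box t) e) (wkTm (factorOpe e) t)
  | etaBox (t : Tm Γ (.box A)) :
      Conv t (.box (.unbox t .nil))
  | iteTrue (g : GExt Γ Θ) (t₁ t₂ : Tm Θ A) : Conv (.ite g .tt t₁ t₂) t₁
  | iteFalse (g : GExt Γ Θ) (t₁ t₂ : Tm Θ A) : Conv (.ite g .ff t₁ t₂) t₂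
  | iteEta (t : Tm Γ .bool) : Conv t (.ite .nil t .tt .ff)
  | iteUnbox (g : GExt Γ Θ) (b : Tm Γ .bool) (t₁ t₂ : Tm Θ (.box A)) (e : Ext Θ Θ') :
      Conv (.unbox (.ite g b t₁ t₂) e)
        (.ite (transG g (extToG e)) b (.unbox t₁ e) (.unbox t₂ e))
  | iteApp (g : GExt Γ Θ) (b : Tm Γ .bool) (t₁ t₂ : Tm Θ (.arr A B)) (u : Tm Θ A) :
      Conv (.app (.ite g b t₁ t₂) u) (.ite g b (.app t₁ u) (.app t₂ u))

/-! ### Composition of OPEs and factorization coherence -/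

def comp : {Γ Γ' Γ'' : Cx} → Ope Γ Γ' → Ope Γ' Γ'' → Ope Γ Γ''
  | _, _, _, o, .drop o' => .drop (comp o o')
  | _, _, _, .drop o, .keep o' => .drop (comp o o')
  | _, _, _, .keep o, .keep o' => .keep (comp o o')
  | _, _, _, .keepLock o, .keepLock o' => .keepLock (comp o o')
  | _, _, _, .base, .base => .base

@[simp] theorem comp_drop {Γ Γ' Γ'' : Cx} {A : Ty} (o : Ope Γ Γ') (o' : Ope Γ' Γ'') :
    comp o (.drop (A := A) o') = .drop (comp o o') := by cases o <;> rfl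

@[simp] theorem comp_drop_keep {Γ Γ' Γ'' : Cx} {A : Ty} (o : Ope Γ Γ') (o' : Ope Γ' Γ'') :
    comp (.drop (A := A) o) (.keep o') = .drop (comp o o') := rfl

@[simp] theorem comp_keep_keep {Γ Γ' Γ'' : Cx} {A : Ty} (o : Ope Γ Γ') (o' : Ope Γ' Γ'') :
    comp (.keep (A := A) o) (.keep o') = .keep (comp o o') := rfl

@[simp] theorem comp_keepLock {Γ Γ' Γ'' : Cx} (o : Ope Γ Γ') (o' : Ope Γ' Γ'') :
    comp (.keepLock o) (.keepLock o') = .keepLock (comp o o') := rfl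

@[simp] theorem comp_base : comp .base .base = .base := rfl

@[simp] theorem transG_nil {Δ Γ : Cx} (g : GExt Δ Γ) : transG g .nil = g := by
  cases Γ <;> rfl

@[simp] theorem transG_var {Δ Γ Θ : Cx} {A : Ty} (g : GExt Δ Γ) (g' : GExt Γ Θ) :
    transG g (.var (A := A) g') = .var (transG g g') := rfl

@[simp] theorem transG_lock {Δ Γ Θ : Cx} (g : GExt Δ Γ) (g' : GExt Γ Θ) :
    transG g (.lock g') = .lock (transG g g') := rfl

@[simp] theorem factor_drop {Δ Γ Γ' : Cx} {A : Ty} (e : Ext Δ Γ) (o : Ope Γ Γ') :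
    factor e (.drop (A := A) o) = ⟨_, (factor e o).2.1, .var (factor e o).2.2⟩ := by
  cases e <;> rfl

@[simp] theorem factor_nil_keepLock {Γ Γ' : Cx} (o : Ope Γ Γ') :
    factor .nil (.keepLock o) = ⟨_, o, .nil⟩ := rfl

@[simp] theorem factor_var_keep {Δ Γ Γ' : Cx} {A : Ty} (e : Ext Δ Γ) (o : Ope Γ Γ') :
    factor (.var (A := A) e) (.keep o) = ⟨_, (factor e o).2.1, .var (factor e o).2.2⟩ := rfl

@[simp] theorem factorG_drop {Δ Γ Γ' : Cx} {A : Ty} (g : GExt Δ Γ) (o : Ope Γ Γ') :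
    factorG g (.drop (A := A) o) = ⟨_, (factorG g o).2.1, .var (factorG g o).2.2⟩ := by
  cases g <;> rfl

@[simp] theorem factorG_nil_keep {Γ Γ' : Cx} {A : Ty} (o : Ope Γ Γ') :
    factorG .nil (.keep (A := A) o) = ⟨_, .keep o, .nil⟩ := rfl

@[simp] theorem factorG_nil_keepLock {Γ Γ' : Cx} (o : Ope Γ Γ') :
    factorG .nil (.keepLock o) = ⟨_, .keepLock o, .nil⟩ := rfl

@[simp] theorem factorG_nil_base : factorG .nil .base = ⟨_, .base, .nil⟩ := rfl

@[simp] theorem factorG_var_keep {Δ Γ Γ' : Cx} {A : Ty} (g : GExt Δ Γ) (o : Ope Γ Γ') :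
    factorG (.var (A := A) g) (.keep o) = ⟨_, (factorG g o).2.1, .var (factorG g o).2.2⟩ := rfl

@[simp] theorem factorG_lock_keepLock {Δ Γ Γ' : Cx} (g : GExt Δ Γ) (o : Ope Γ Γ') :
    factorG (.lock g) (.keepLock o) = ⟨_, (factorG g o).2.1, .lock (factorG g o).2.2⟩ := rfl


theorem comp_idl : ∀ {Γ Γ' : Cx} (o : Ope Γ Γ'), comp (idOpe Γ) o = o
  | _, _, .base => rfl
  | _, _, .drop o => by rw [comp_drop, comp_idl o]
  | _, _, .keep o => by rw [show idOpe _ = Ope.keep (idOpe _) from rfl, comp_keep_keep, comp_idl o]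
  | _, _, .keepLock o => by rw [show idOpe _ = Ope.keepLock (idOpe _) from rfl, comp_keepLock, comp_idl o]

theorem comp_idr : ∀ {Γ Γ' : Cx} (o : Ope Γ Γ'), comp o (idOpe Γ') = o
  | _, _, .base => rfl
  | _, _, .drop o => by rw [show idOpe _ = Ope.keep (idOpe _) from rfl, comp_drop_keep, comp_idr o]
  | _, _, .keep o => by rw [show idOpe _ = Ope.keep (idOpe _) from rfl, comp_keep_keep, comp_idr o]
  | _, _, .keepLock o => by rw [show idOpe _ = Ope.keepLock (idOpe _) from rfl, comp_keepLock, comp_idr o]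

theorem factor_id : ∀ {Δ Γ : Cx} (e : Ext Δ Γ), factor e (idOpe Γ) = ⟨Δ, idOpe Δ, e⟩
  | _, _, .nil => rfl
  | _, _, .var e => by
      rw [show idOpe _ = Ope.keep (idOpe _) from rfl, factor_var_keep, factor_id e]

theorem factorG_id : ∀ {Δ Γ : Cx} (g : GExt Δ Γ), factorG g (idOpe Γ) = ⟨Δ, idOpe Δ, g⟩
  | _, .nil, .nil => rfl
  | .snoc _ _, .snoc _ _, .nil => rfl
  | .lock _, .lock _, .nil => rfl
  | _, _, .var g => by
      rw [show idOpe _ = Ope.keep (idOpe _) from rfl, factorG_var_keep, factorG_id g]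
  | _, _, .lock g => by
      rw [show idOpe _ = Ope.keepLock (idOpe _) from rfl, factorG_lock_keepLock, factorG_id g]

theorem factor_comp : ∀ {Δ Γ Γ' Γ'' : Cx} (e : Ext Δ Γ) (o : Ope Γ Γ') (o' : Ope Γ' Γ''),
    factor e (comp o o') =
      ⟨_, comp (factor e o).2.1 (factor (factor e o).2.2 o').2.1,
        (factor (factor e o).2.2 o').2.2⟩
  | _, _, _, _, e, o, .drop o' => by
      rw [comp_drop, factor_drop, factor_drop, factor_comp e o o']
  | _, _, _, _, e, .drop o, .keep o' => by
      rw [comp_drop_keep, factor_drop, factor_drop, factor_var_keep, factor_comp e o o']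
  | _, _, _, _, .var e, .keep o, .keep o' => by
      rw [comp_keep_keep, factor_var_keep, factor_var_keep, factor_var_keep, factor_comp e o o']
  | _, _, _, _, .nil, .keepLock o, .keepLock o' => by
      rw [comp_keepLock, factor_nil_keepLock, factor_nil_keepLock, factor_nil_keepLock]
  | _, _, _, _, e, o, .base => by cases o; cases e

theorem factorG_comp : ∀ {Δ Γ Γ' Γ'' : Cx} (g : GExt Δ Γ) (o : Ope Γ Γ') (o' : Ope Γ' Γ''),
    factorG g (comp o o') =
      ⟨_, comp (factorG g o).2.1 (factorG (factorG g o).2.2 o').2.1,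
        (factorG (factorG g o).2.2 o').2.2⟩
  | _, _, _, _, g, o, .drop o' => by
      rw [comp_drop, factorG_drop, factorG_drop, factorG_comp g o o']
  | _, _, _, _, g, .drop o, .keep o' => by
      rw [comp_drop_keep, factorG_drop, factorG_drop, factorG_var_keep, factorG_comp g o o']
  | _, _, _, _, .nil, .keep o, .keep o' => by
      rw [comp_keep_keep, factorG_nil_keep, factorG_nil_keep, factorG_nil_keep, comp_keep_keep]
  | _, _, _, _, .var g, .keep o, .keep o' => by
      rw [comp_keep_keep, factorG_var_keep, factorG_var_keep, factorG_var_keep, factorG_comp g o o']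
  | _, _, _, _, .nil, .keepLock o, .keepLock o' => by
      rw [comp_keepLock, factorG_nil_keepLock, factorG_nil_keepLock, factorG_nil_keepLock, comp_keepLock]
  | _, _, _, _, .lock g, .keepLock o, .keepLock o' => by
      rw [comp_keepLock, factorG_lock_keepLock, factorG_lock_keepLock, factorG_lock_keepLock,
        factorG_comp g o o']
  | _, _, _, _, .nil, .base, .base => rfl

theorem factorG_transG : ∀ {Δ Θ Γ Γ' : Cx} (g : GExt Δ Θ) (e : Ext Θ Γ) (o : Ope Γ Γ'),
    factorG (transG g (extToG e)) o =
      ⟨_, (factorG g (factor e o).2.1).2.1,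
        transG (factorG g (factor e o).2.1).2.2 (extToG (factor e o).2.2)⟩
  | _, _, _, _, g, e, .drop o => by
      rw [factor_drop, factorG_drop, factorG_transG g e o]
      rfl
  | _, _, _, _, g, .var e, .keep o => by
      simp only [extToG, transG_var, factor_var_keep, factorG_var_keep]
      rw [factorG_transG g e o]
  | _, _, _, _, g, .nil, .keepLock o => by
      simp only [extToG, transG_lock, transG_nil, factor_nil_keepLock, factorG_lock_keepLock]
/-! ### Reduction lemmas for the pinned recursive functions -/

@[simp] theorem wkTm_var {Γ Γ' : Cx} {A : Ty} (o : Ope Γ Γ') (v : Var Γ A) :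
    wkTm o (.var v) = .var (wkVar o v) := by simp [wkTm]
@[simp] theorem wkTm_lam {Γ Γ' : Cx} {A B : Ty} (o : Ope Γ Γ') (t : Tm (.snoc Γ A) B) :
    wkTm o (.lam t) = .lam (wkTm (.keep o) t) := by simp [wkTm]
@[simp] theorem wkTm_app {Γ Γ' : Cx} {A B : Ty} (o : Ope Γ Γ') (t : Tm Γ (.arr A B)) (u : Tm Γ A) :
    wkTm o (.app t u) = .app (wkTm o t) (wkTm o u) := by simp [wkTm]
@[simp] theorem wkTm_box {Γ Γ' : Cx} {A : Ty} (o : Ope Γ Γ') (t : Tm (.lock Γ) A) :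
    wkTm o (.box t) = .box (wkTm (.keepLock o) t) := by simp [wkTm]
@[simp] theorem wkTm_unbox {Γ Γ' Δ : Cx} {A : Ty} (o : Ope Γ Γ') (t : Tm Δ (.box A)) (e : Ext Δ Γ) :
    wkTm o (.unbox t e) = .unbox (wkTm (factor e o).2.1 t) (factor e o).2.2 := by simp [wkTm]
@[simp] theorem wkTm_tt {Γ Γ' : Cx} (o : Ope Γ Γ') : wkTm o (.tt) = .tt := by simp [wkTm]
@[simp] theorem wkTm_ff {Γ Γ' : Cx} (o : Ope Γ Γ') : wkTm o (.ff) = .ff := by simp [wkTm]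
@[simp] theorem wkTm_ite {Γ Γ' Θ : Cx} {A : Ty} (o : Ope Γ Γ') (g : GExt Θ Γ)
    (b : Tm Θ .bool) (t₁ t₂ : Tm Γ A) :
    wkTm o (.ite g b t₁ t₂) =
      .ite (factorG g o).2.2 (wkTm (factorG g o).2.1 b) (wkTm o t₁) (wkTm o t₂) := by simp [wkTm]

@[simp] theorem substVar_zero {Γ Δ : Cx} {A : Ty} (s : Sub Γ Δ) (t : Tm Γ A) :
    substVar (.snoc s t) .zero = t := by simp [substVar]
@[simp] theorem substVar_succ {Γ Δ : Cx} {A B : Ty} (s : Sub Γ Δ) (t : Tm Γ B) (v : Var Δ A) :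
    substVar (.snoc s t) (.succ v) = substVar s v := by simp [substVar]

@[simp] theorem trimSub_nil {Γ Θ Δ : Cx} (s : Sub Θ Δ) (e : Ext Θ Γ) :
    trimSub (.lock s e) .nil = ⟨_, s, e⟩ := by simp [trimSub]
@[simp] theorem trimSub_var {Γ Δ Θ : Cx} {A : Ty} (s : Sub Γ Δ) (t : Tm Γ A) (e : Ext Θ Δ) :
    trimSub (.snoc s t) (.var e) = trimSub s e := by simp [trimSub]

@[simp] theorem trimG_nil {Γ' Θ : Cx} (s : Sub Γ' Θ) : trimG s .nil = ⟨Γ', s, .nil⟩ := by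
  simp [trimG]
@[simp] theorem trimG_var {Γ' Θ Γ : Cx} {A : Ty} (s : Sub Γ' Θ) (t : Tm Γ' A) (g : GExt Γ Θ) :
    trimG (.snoc s t) (.var g) = trimG s g := by simp [trimG]
@[simp] theorem trimG_lock {Γ' Θ Δ Γ : Cx} (s : Sub Θ Δ) (e : Ext Θ Γ') (g : GExt Γ Δ) :
    trimG (.lock s e) (.lock g) =
      ⟨_, (trimG s g).2.1, transG (trimG s g).2.2 (extToG e)⟩ := by simp [trimG]

@[simp] theorem subst_var {Γ Δ : Cx} {A : Ty} (s : Sub Γ Δ) (v : Var Δ A) :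
    subst s (.var v) = substVar s v := by simp [subst]
@[simp] theorem subst_lam {Γ Δ : Cx} {A B : Ty} (s : Sub Γ Δ) (t : Tm (.snoc Δ A) B) :
    subst s (.lam t) = .lam (subst (.snoc (wkSub (.drop (idOpe Γ)) s) (.var .zero)) t) := by
  simp [subst]
@[simp] theorem subst_app {Γ Δ : Cx} {A B : Ty} (s : Sub Γ Δ) (t : Tm Δ (.arr A B)) (u : Tm Δ A) :
    subst s (.app t u) = .app (subst s t) (subst s u) := by simp [subst]
@[simp] theorem subst_box {Γ Δ : Cx} {A : Ty} (s : Sub Γ Δ) (t : Tm (.lock Δ) A) :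
    subst s (.box t) = .box (subst (.lock s .nil) t) := by simp [subst]
@[simp] theorem subst_unbox {Γ Δ Θ : Cx} {A : Ty} (s : Sub Γ Δ) (t : Tm Θ (.box A)) (e : Ext Θ Δ) :
    subst s (.unbox t e) = .unbox (subst (trimSub s e).2.1 t) (trimSub s e).2.2 := by simp [subst]
@[simp] theorem subst_tt {Γ Δ : Cx} (s : Sub Γ Δ) : subst s (.tt) = .tt := by simp [subst]
@[simp] theorem subst_ff {Γ Δ : Cx} (s : Sub Γ Δ) : subst s (.ff) = .ff := by simp [subst]
@[simp] theorem subst_ite {Γ Δ Θ : Cx} {A : Ty} (s : Sub Γ Δ) (g : GExt Θ Δ)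
    (b : Tm Θ .bool) (t₁ t₂ : Tm Δ A) :
    subst s (.ite g b t₁ t₂) =
      .ite (trimG s g).2.2 (subst (trimG s g).2.1 b) (subst s t₁) (subst s t₂) := by simp [subst]

/-! ### Weakening laws -/

@[simp] theorem wkVar_drop {Γ Γ' : Cx} {A B : Ty} (o : Ope Γ Γ') (v : Var Γ A) :
    wkVar (.drop (A := B) o) v = .succ (wkVar o v) := by cases v <;> rfl

@[simp] theorem wkVar_keep_zero {Γ Γ' : Cx} {A : Ty} (o : Ope Γ Γ') :
    wkVar (.keep (A := A) o) .zero = .zero := rfl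

@[simp] theorem wkVar_keep_succ {Γ Γ' : Cx} {A B : Ty} (o : Ope Γ Γ') (v : Var Γ A) :
    wkVar (.keep (A := B) o) (.succ v) = .succ (wkVar o v) := rfl

theorem wkVar_id : ∀ {Γ : Cx} {A : Ty} (v : Var Γ A), wkVar (idOpe Γ) v = v
  | _, _, .zero => rfl
  | _, _, .succ v => by
      rw [show idOpe _ = Ope.keep (idOpe _) from rfl, wkVar_keep_succ, wkVar_id v]

theorem wkVar_comp : ∀ {Γ Γ' Γ'' : Cx} {A : Ty} (o : Ope Γ Γ') (o' : Ope Γ' Γ'') (v : Var Γ A),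
    wkVar o' (wkVar o v) = wkVar (comp o o') v
  | _, _, _, _, o, .drop o', v => by
      rw [wkVar_drop, comp_drop, wkVar_drop, wkVar_comp o o' v]
  | _, _, _, _, .drop o, .keep o', v => by
      rw [wkVar_drop, wkVar_keep_succ, comp_drop_keep, wkVar_drop, wkVar_comp o o' v]
  | _, _, _, _, .keep o, .keep o', .zero => rfl
  | _, _, _, _, .keep o, .keep o', .succ v => by
      rw [wkVar_keep_succ, wkVar_keep_succ, comp_keep_keep, wkVar_keep_succ, wkVar_comp o o' v]
  | _, _, _, _, .keepLock _, .keepLock _, v => nomatch v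
  | _, _, _, _, .base, .base, v => nomatch v

theorem wkTm_id : ∀ {Γ : Cx} {A : Ty} (t : Tm Γ A), wkTm (idOpe Γ) t = t
  | _, _, .var v => by rw [wkTm_var, wkVar_id]
  | Γ, _, .lam t => by
      rw [wkTm_lam, show (Ope.keep (idOpe Γ) : Ope _ _) = idOpe _ from rfl, wkTm_id t]
  | _, _, .app t u => by rw [wkTm_app, wkTm_id t, wkTm_id u]
  | Γ, _, .box t => by
      rw [wkTm_box, show (Ope.keepLock (idOpe Γ) : Ope _ _) = idOpe _ from rfl, wkTm_id t]
  | _, _, .unbox t e => by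
      rw [wkTm_unbox, factor_id e]
      rw [show (⟨_, idOpe _, e⟩ : (Δ' : Cx) × Ope _ Δ' × Ext Δ' _).2.1 = idOpe _ from rfl,
        wkTm_id t]
  | _, _, .tt => by rw [wkTm_tt]
  | _, _, .ff => by rw [wkTm_ff]
  | _, _, .ite g b t₁ t₂ => by
      rw [wkTm_ite, factorG_id g, wkTm_id t₁, wkTm_id t₂]
      rw [show (⟨_, idOpe _, g⟩ : (Δ' : Cx) × Ope _ Δ' × GExt Δ' _).2.1 = idOpe _ from rfl,
        wkTm_id b]

theorem wkTm_comp : ∀ {Γ Γ' Γ'' : Cx} {A : Ty} (o : Ope Γ Γ') (o' : Ope Γ' Γ'') (t : Tm Γ A),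
    wkTm o' (wkTm o t) = wkTm (comp o o') t
  | _, _, _, _, o, o', .var v => by
      rw [wkTm_var, wkTm_var, wkVar_comp o o' v, wkTm_var]
  | _, _, _, _, o, o', .lam t => by
      rw [wkTm_lam, wkTm_lam, wkTm_comp (.keep o) (.keep o') t, comp_keep_keep, wkTm_lam]
  | _, _, _, _, o, o', .app t u => by
      rw [wkTm_app, wkTm_app, wkTm_comp o o' t, wkTm_comp o o' u, wkTm_app]
  | _, _, _, _, o, o', .box t => by
      rw [wkTm_box, wkTm_box, wkTm_comp (.keepLock o) (.keepLock o') t, comp_keepLock, wkTm_box]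
  | _, _, _, _, o, o', .unbox t e => by
      rw [wkTm_unbox, wkTm_unbox, wkTm_comp _ _ t, wkTm_unbox, factor_comp e o o']
  | _, _, _, _, o, o', .tt => by rw [wkTm_tt, wkTm_tt, wkTm_tt]
  | _, _, _, _, o, o', .ff => by rw [wkTm_ff, wkTm_ff, wkTm_ff]
  | _, _, _, _, o, o', .ite g b t₁ t₂ => by
      rw [wkTm_ite, wkTm_ite, wkTm_comp _ _ b, wkTm_comp o o' t₁, wkTm_comp o o' t₂,
        wkTm_ite, factorG_comp g o o']

@[simp] theorem wkSub_empty {Γ Γ' : Cx} (o : Ope Γ Γ') : wkSub o (.empty) = .empty := rfl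

@[simp] theorem wkSub_snoc {Γ Γ' Δ : Cx} {A : Ty} (o : Ope Γ Γ') (s : Sub Γ Δ) (t : Tm Γ A) :
    wkSub o (.snoc s t) = .snoc (wkSub o s) (wkTm o t) := rfl

@[simp] theorem wkSub_lock {Γ Γ' Θ Δ : Cx} (o : Ope Γ Γ') (s : Sub Θ Δ) (e : Ext Θ Γ) :
    wkSub o (.lock s e) = .lock (wkSub (factor e o).2.1 s) (factor e o).2.2 := rfl

theorem wkSub_id : ∀ {Γ Δ : Cx} (σ : Sub Γ Δ), wkSub (idOpe Γ) σ = σ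
  | _, _, .empty => rfl
  | _, _, .snoc s t => by rw [wkSub_snoc, wkSub_id s, wkTm_id t]
  | _, _, .lock s e => by
      rw [wkSub_lock, factor_id e]
      rw [show (⟨_, idOpe _, e⟩ : (Δ' : Cx) × Ope _ Δ' × Ext Δ' _).2.1 = idOpe _ from rfl,
        wkSub_id s]

theorem wkSub_comp : ∀ {Γ Γ' Γ'' Δ : Cx} (o : Ope Γ Γ') (o' : Ope Γ' Γ'') (σ : Sub Γ Δ),
    wkSub o' (wkSub o σ) = wkSub (comp o o') σ
  | _, _, _, _, o, o', .empty => rfl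
  | _, _, _, _, o, o', .snoc s t => by
      rw [wkSub_snoc, wkSub_snoc, wkSub_comp o o' s, wkTm_comp o o' t, wkSub_snoc]
  | _, _, _, _, o, o', .lock s e => by
      rw [wkSub_lock, wkSub_lock, wkSub_comp _ _ s, wkSub_lock, factor_comp e o o']
/-! ### Trimming substitutions along OPEs, and substitution fusion laws -/

theorem comp_assoc : ∀ {Γ₀ Γ₁ Γ₂ Γ₃ : Cx} (a : Ope Γ₀ Γ₁) (b : Ope Γ₁ Γ₂) (c : Ope Γ₂ Γ₃),
    comp (comp a b) c = comp a (comp b c)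
  | _, _, _, _, a, b, .drop c => by
      simp only [comp_drop, comp_assoc a b c]
  | _, _, _, _, a, .drop b, .keep c => by
      simp only [comp_drop, comp_drop_keep, comp_assoc a b c]
  | _, _, _, _, .drop a, .keep b, .keep c => by
      simp only [comp_drop, comp_drop_keep, comp_keep_keep, comp_assoc a b c]
  | _, _, _, _, .keep a, .keep b, .keep c => by
      simp only [comp_keep_keep, comp_assoc a b c]
  | _, _, _, _, .keepLock a, .keepLock b, .keepLock c => by
      simp only [comp_keepLock, comp_assoc a b c]
  | _, _, _, _, .base, .base, .base => rfl

/-- Restriction of a substitution along an OPE. -/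
def trimOpe : {Δ Δ' Γ : Cx} → Ope Δ Δ' → Sub Γ Δ' → Sub Γ Δ
  | _, _, _, .base, s => s
  | _, _, _, .drop o, .snoc s _ => trimOpe o s
  | _, _, _, .keep o, .snoc s t => .snoc (trimOpe o s) t
  | _, _, _, .keepLock o, .lock s e => .lock (trimOpe o s) e

@[simp] theorem trimOpe_base {Γ : Cx} (s : Sub Γ .nil) : trimOpe .base s = s := rfl
@[simp] theorem trimOpe_drop {Δ Δ' Γ : Cx} {A : Ty} (o : Ope Δ Δ') (s : Sub Γ Δ') (t : Tm Γ A) :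
    trimOpe (.drop o) (.snoc s t) = trimOpe o s := rfl
@[simp] theorem trimOpe_keep {Δ Δ' Γ : Cx} {A : Ty} (o : Ope Δ Δ') (s : Sub Γ Δ') (t : Tm Γ A) :
    trimOpe (.keep (A := A) o) (.snoc s t) = .snoc (trimOpe o s) t := rfl
@[simp] theorem trimOpe_lock {Δ Δ' Γ Θ : Cx} (o : Ope Δ Δ') (s : Sub Θ Δ') (e : Ext Θ Γ) :
    trimOpe (.keepLock o) (.lock s e) = .lock (trimOpe o s) e := rfl

theorem trimOpe_id : ∀ {Δ Γ : Cx} (σ : Sub Γ Δ), trimOpe (idOpe Δ) σ = σ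
  | _, _, .empty => rfl
  | _, _, .snoc s t => by
      rw [show idOpe _ = Ope.keep (idOpe _) from rfl, trimOpe_keep, trimOpe_id s]
  | _, _, .lock s e => by
      rw [show idOpe _ = Ope.keepLock (idOpe _) from rfl, trimOpe_lock, trimOpe_id s]

theorem substVar_trimOpe : ∀ {Δ Δ' Γ : Cx} {A : Ty} (o : Ope Δ Δ') (σ : Sub Γ Δ') (v : Var Δ A),
    substVar (trimOpe o σ) v = substVar σ (wkVar o v)
  | _, _, _, _, .drop o, .snoc s t, v => by
      rw [trimOpe_drop, wkVar_drop, substVar_succ, substVar_trimOpe o s v]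
  | _, _, _, _, .keep o, .snoc s t, .zero => rfl
  | _, _, _, _, .keep o, .snoc s t, .succ v => by
      rw [trimOpe_keep, wkVar_keep_succ, substVar_succ, substVar_succ, substVar_trimOpe o s v]

theorem trimOpe_wkSub : ∀ {Δ Δ' Γ Γ' : Cx} (o : Ope Δ Δ') (w : Ope Γ Γ') (σ : Sub Γ Δ'),
    trimOpe o (wkSub w σ) = wkSub w (trimOpe o σ)
  | _, _, _, _, .base, w, s => rfl
  | _, _, _, _, .drop o, w, .snoc s t => by
      rw [wkSub_snoc, trimOpe_drop, trimOpe_drop, trimOpe_wkSub o w s]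
  | _, _, _, _, .keep o, w, .snoc s t => by
      rw [wkSub_snoc, trimOpe_keep, trimOpe_keep, wkSub_snoc, trimOpe_wkSub o w s]
  | _, _, _, _, .keepLock o, w, .lock s e => by
      rw [wkSub_lock, trimOpe_lock, trimOpe_lock, wkSub_lock, trimOpe_wkSub o _ s]

theorem trimSub_trimOpe : ∀ {Δ Δ' Γ Θ : Cx} (o : Ope Δ Δ') (σ : Sub Γ Δ') (e : Ext Θ Δ),
    trimSub (trimOpe o σ) e =
      ⟨_, trimOpe (factor e o).2.1 (trimSub σ (factor e o).2.2).2.1,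
        (trimSub σ (factor e o).2.2).2.2⟩
  | _, _, _, _, .drop o, .snoc s t, e => by
      rw [trimOpe_drop, factor_drop, trimSub_var, trimSub_trimOpe o s e]
  | _, _, _, _, .keep o, .snoc s t, .var e => by
      rw [trimOpe_keep, factor_var_keep, trimSub_var, trimSub_var, trimSub_trimOpe o s e]
  | _, _, _, _, .keepLock o, .lock s e', .nil => by
      rw [trimOpe_lock, factor_nil_keepLock, trimSub_nil, trimSub_nil]

theorem trimG_trimOpe : ∀ {Δ Δ' Γ Θ : Cx} (o : Ope Δ Δ') (σ : Sub Γ Δ') (g : GExt Θ Δ),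
    trimG (trimOpe o σ) g =
      ⟨_, trimOpe (factorG g o).2.1 (trimG σ (factorG g o).2.2).2.1,
        (trimG σ (factorG g o).2.2).2.2⟩
  | _, _, _, _, .drop o, .snoc s t, g => by
      rw [trimOpe_drop, factorG_drop, trimG_var, trimG_trimOpe o s g]
  | _, _, _, _, .keep o, .snoc s t, .nil => by
      simp only [trimOpe_keep, factorG_nil_keep]
      rw [trimG_nil, trimG_nil]
      simp only [trimOpe_keep]
  | _, _, _, _, .keep o, .snoc s t, .var g => by
      rw [trimOpe_keep, factorG_var_keep, trimG_var, trimG_var, trimG_trimOpe o s g]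
  | _, _, _, _, .keepLock o, .lock s e, .nil => by
      simp only [trimOpe_lock, factorG_nil_keepLock]
      rw [trimG_nil, trimG_nil]
      simp only [trimOpe_lock]
  | _, _, _, _, .keepLock o, .lock s e, .lock g => by
      rw [trimOpe_lock, factorG_lock_keepLock, trimG_lock, trimG_lock, trimG_trimOpe o s g]
  | _, _, _, _, .base, s, .nil => by
      simp only [trimOpe_base, factorG_nil_base]

/-- Substitution after weakening. -/
theorem subst_wkTm : ∀ {Δ Δ' Γ : Cx} {A : Ty} (o : Ope Δ Δ') (σ : Sub Γ Δ') (t : Tm Δ A),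
    subst σ (wkTm o t) = subst (trimOpe o σ) t
  | _, _, _, _, o, σ, .var v => by
      rw [wkTm_var, subst_var, subst_var, substVar_trimOpe o σ v]
  | _, _, _, _, o, σ, .lam t => by
      rw [wkTm_lam, subst_lam, subst_lam, subst_wkTm (.keep o) _ t, trimOpe_keep, trimOpe_wkSub]
  | _, _, _, _, o, σ, .app t u => by
      rw [wkTm_app, subst_app, subst_app, subst_wkTm o σ t, subst_wkTm o σ u]
  | _, _, _, _, o, σ, .box t => by
      rw [wkTm_box, subst_box, subst_box, subst_wkTm (.keepLock o) _ t, trimOpe_lock]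
  | _, _, _, _, o, σ, .unbox t e => by
      rw [wkTm_unbox, subst_unbox, subst_unbox, subst_wkTm _ _ t, trimSub_trimOpe o σ e]
  | _, _, _, _, o, σ, .tt => by rw [wkTm_tt, subst_tt, subst_tt]
  | _, _, _, _, o, σ, .ff => by rw [wkTm_ff, subst_ff, subst_ff]
  | _, _, _, _, o, σ, .ite g b t₁ t₂ => by
      rw [wkTm_ite, subst_ite, subst_ite, subst_wkTm _ _ b, subst_wkTm o σ t₁,
        subst_wkTm o σ t₂, trimG_trimOpe o σ g]

theorem substVar_wkSub : ∀ {Γ Γ' Δ : Cx} {A : Ty} (o : Ope Γ Γ') (σ : Sub Γ Δ) (v : Var Δ A),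
    substVar (wkSub o σ) v = wkTm o (substVar σ v)
  | _, _, _, _, o, .snoc s t, .zero => rfl
  | _, _, _, _, o, .snoc s t, .succ v => by
      rw [wkSub_snoc, substVar_succ, substVar_succ, substVar_wkSub o s v]

theorem trimSub_wkSub : ∀ {Γ Γ' Δ Θ : Cx} (o : Ope Γ Γ') (σ : Sub Γ Δ) (e : Ext Θ Δ),
    trimSub (wkSub o σ) e =
      ⟨_, wkSub (factor (trimSub σ e).2.2 o).2.1 (trimSub σ e).2.1,
        (factor (trimSub σ e).2.2 o).2.2⟩
  | _, _, _, _, o, .lock s e', .nil => by rw [wkSub_lock, trimSub_nil, trimSub_nil]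
  | _, _, _, _, o, .snoc s t, .var e => by
      rw [wkSub_snoc, trimSub_var, trimSub_var, trimSub_wkSub o s e]

theorem substVar_id : ∀ {Γ : Cx} {A : Ty} (v : Var Γ A), substVar (idSub Γ) v = .var v
  | _, _, .zero => rfl
  | _, _, .succ v => by
      rw [show idSub _ = Sub.snoc (wkSub (.drop (idOpe _)) (idSub _)) (.var .zero) from rfl,
        substVar_succ, substVar_wkSub, substVar_id v, wkTm_var, wkVar_drop, wkVar_id]

theorem trimSub_id : ∀ {Γ Θ : Cx} (e : Ext Θ Γ), trimSub (idSub Γ) e = ⟨Θ, idSub Θ, e⟩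
  | _, _, .nil => rfl
  | _, _, .var e => by
      rw [show idSub _ = Sub.snoc (wkSub (.drop (idOpe _)) (idSub _)) (.var .zero) from rfl,
        trimSub_var, trimSub_wkSub, trimSub_id e, factor_drop, factor_id e, wkSub_id]

/-- Composition of substitutions. -/
def compSub : {Γ Δ Θ : Cx} → Sub Γ Δ → Sub Δ Θ → Sub Γ Θ
  | _, _, _, _, .empty => .empty
  | _, _, _, s, .snoc σ t => .snoc (compSub s σ) (subst s t)
  | _, _, _, s, .lock σ e => .lock (compSub (trimSub s e).2.1 σ) (trimSub s e).2.2

@[simp] theorem compSub_empty {Γ Δ : Cx} (s : Sub Γ Δ) : compSub s .empty = .empty := rfl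
@[simp] theorem compSub_snoc {Γ Δ Θ : Cx} {A : Ty} (s : Sub Γ Δ) (σ : Sub Δ Θ) (t : Tm Δ A) :
    compSub s (.snoc σ t) = .snoc (compSub s σ) (subst s t) := rfl
@[simp] theorem compSub_lock {Γ Δ Θ Λ : Cx} (s : Sub Γ Δ) (σ : Sub Λ Θ) (e : Ext Λ Δ) :
    compSub s (.lock σ e) = .lock (compSub (trimSub s e).2.1 σ) (trimSub s e).2.2 := rfl

theorem substVar_compSub : ∀ {Γ Δ Θ : Cx} {A : Ty} (s : Sub Γ Δ) (σ : Sub Δ Θ) (v : Var Θ A),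
    substVar (compSub s σ) v = subst s (substVar σ v)
  | _, _, _, _, s, .snoc σ t, .zero => rfl
  | _, _, _, _, s, .snoc σ t, .succ v => by
      rw [compSub_snoc, substVar_succ, substVar_succ, substVar_compSub s σ v]

theorem trimSub_compSub : ∀ {Γ Δ Θ Λ : Cx} (s : Sub Γ Δ) (σ : Sub Δ Θ) (e : Ext Λ Θ),
    trimSub (compSub s σ) e =
      ⟨_, compSub (trimSub s (trimSub σ e).2.2).2.1 (trimSub σ e).2.1,
        (trimSub s (trimSub σ e).2.2).2.2⟩
  | _, _, _, _, s, .lock σ e', .nil => by rw [compSub_lock, trimSub_nil, trimSub_nil]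
  | _, _, _, _, s, .snoc σ t, .var e => by
      rw [compSub_snoc, trimSub_var, trimSub_var, trimSub_compSub s σ e]

theorem trimG_transG_extToG : ∀ {Γ' Δ Θ Λ : Cx} (s : Sub Γ' Δ) (e : Ext Θ Δ) (g : GExt Λ Θ),
    trimG s (transG g (extToG e)) =
      ⟨_, (trimG (trimSub s e).2.1 g).2.1,
        transG (trimG (trimSub s e).2.1 g).2.2 (extToG (trimSub s e).2.2)⟩
  | _, _, _, _, .lock s e', .nil, g => by
      rw [show extToG Ext.nil = GExt.lock GExt.nil from (by simp [extToG]), transG_lock,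
        transG_nil, trimG_lock, trimSub_nil]
  | _, _, _, _, .snoc s t, .var e, g => by
      rw [show extToG (Ext.var e) = GExt.var (extToG e) from (by simp [extToG]), transG_var,
        trimG_var, trimSub_var, trimG_transG_extToG s e g]

theorem trimG_compSub : ∀ {Γ Δ Θ Λ : Cx} (s : Sub Γ Δ) (σ : Sub Δ Θ) (g : GExt Λ Θ),
    trimG (compSub s σ) g =
      ⟨_, compSub (trimG s (trimG σ g).2.2).2.1 (trimG σ g).2.1,
        (trimG s (trimG σ g).2.2).2.2⟩
  | _, _, _, _, s, σ, .nil => by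
      rw [trimG_nil σ]
      dsimp only
      rw [trimG_nil s]
      dsimp only
      rw [trimG_nil (compSub s σ)]
  | _, _, _, _, s, .snoc σ t, .var g => by
      rw [compSub_snoc, trimG_var, trimG_var, trimG_compSub s σ g]
  | _, _, _, _, s, .lock σ e, .lock g => by
      rw [compSub_lock, trimG_lock, trimG_lock, trimG_compSub _ σ g, trimG_transG_extToG]

theorem compSub_wkSub : ∀ {Γ Δ Δ' Θ : Cx} (s : Sub Γ Δ') (o : Ope Δ Δ') (σ : Sub Δ Θ),
    compSub s (wkSub o σ) = compSub (trimOpe o s) σ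
  | _, _, _, _, s, o, .empty => rfl
  | _, _, _, _, s, o, .snoc σ t => by
      rw [wkSub_snoc, compSub_snoc, compSub_snoc, compSub_wkSub s o σ, subst_wkTm]
  | _, _, _, _, s, o, .lock σ e => by
      rw [wkSub_lock, compSub_lock, compSub_lock, trimSub_trimOpe o s e,
        compSub_wkSub _ _ σ]

theorem compSub_idr : ∀ {Γ Δ : Cx} (s : Sub Γ Δ), compSub s (idSub Δ) = s
  | _, _, .empty => rfl
  | _, _, .snoc s t => by
      rw [show idSub _ = Sub.snoc (wkSub (.drop (idOpe _)) (idSub _)) (.var .zero) from rfl,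
        compSub_snoc, compSub_wkSub, trimOpe_drop, trimOpe_id, compSub_idr s, subst_var,
        substVar_zero]
  | _, _, .lock s e => by
      rw [show idSub _ = Sub.lock (idSub _) .nil from rfl, compSub_lock, trimSub_nil,
        compSub_idr s]

theorem trimOpe_idSub : ∀ {Γ Γ' : Cx} (o : Ope Γ Γ'), trimOpe o (idSub Γ') = wkSub o (idSub Γ)
  | _, _, .base => rfl
  | _, _, .drop o => by
      rw [show idSub _ = Sub.snoc (wkSub (.drop (idOpe _)) (idSub _)) (.var .zero) from rfl,
        trimOpe_drop, trimOpe_wkSub, trimOpe_idSub o, wkSub_comp, comp_drop, comp_idr]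
  | _, _, .keep o => by
      rw [show idSub _ = Sub.snoc (wkSub (.drop (idOpe _)) (idSub _)) (.var .zero) from rfl,
        show idSub _ = Sub.snoc (wkSub (.drop (idOpe _)) (idSub _)) (.var .zero) from rfl,
        trimOpe_keep, trimOpe_wkSub, trimOpe_idSub o, wkSub_snoc, wkSub_comp, wkSub_comp,
        comp_drop, comp_idr, comp_drop_keep, comp_idl, wkTm_var, wkVar_keep_zero]
  | _, _, .keepLock o => by
      rw [show idSub _ = Sub.lock (idSub _) .nil from rfl,
        show idSub _ = Sub.lock (idSub _) .nil from rfl,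
        trimOpe_lock, trimOpe_idSub o, wkSub_lock, factor_nil_keepLock]

/-- Key identity: substituting along a weakened identity equals collapsing after weakening. -/
theorem subst_wkSub_idSub {Γ Γ' : Cx} {A : Ty} (o : Ope Γ Γ') (t : Tm Γ A) :
    subst (wkSub o (idSub Γ)) t = subst (idSub Γ') (wkTm o t) := by
  rw [subst_wkTm, trimOpe_idSub]

/-- Renaming substitutions. -/
inductive IsRen : {Γ Δ : Cx} → Sub Γ Δ → Prop
  | empty : IsRen .empty
  | snoc {Γ Δ : Cx} {A : Ty} {s : Sub Γ Δ} (h : IsRen s) (v : Var Γ A) : IsRen (.snoc s (.var v))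
  | lock {Γ Δ Θ : Cx} {s : Sub Θ Δ} (h : IsRen s) (e : Ext Θ Γ) : IsRen (.lock s e)

theorem isRen_wkSub : ∀ {Γ Γ' Δ : Cx} (o : Ope Γ Γ') {σ : Sub Γ Δ}, IsRen σ → IsRen (wkSub o σ)
  | _, _, _, o, _, .empty => .empty
  | _, _, _, o, _, .snoc h v => by
      rw [wkSub_snoc, wkTm_var]; exact .snoc (isRen_wkSub o h) _
  | _, _, _, o, _, .lock h e => by rw [wkSub_lock]; exact .lock (isRen_wkSub _ h) _

theorem isRen_idSub : ∀ (Γ : Cx), IsRen (idSub Γ)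
  | .nil => .empty
  | .snoc Γ _ => .snoc (isRen_wkSub _ (isRen_idSub Γ)) _
  | .lock Γ => .lock (isRen_idSub Γ) _

theorem isRen_trimSub : ∀ {Γ Δ Θ : Cx} {σ : Sub Γ Δ} (e : Ext Θ Δ), IsRen σ →
    IsRen (trimSub σ e).2.1
  | _, _, _, _, .nil, .lock h e' => by rw [trimSub_nil]; exact h
  | _, _, _, _, .var e, .snoc h v => by rw [trimSub_var]; exact isRen_trimSub e h

theorem isRen_trimOpe : ∀ {Δ Δ' Γ : Cx} (o : Ope Δ Δ') {σ : Sub Γ Δ'}, IsRen σ →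
    IsRen (trimOpe o σ)
  | _, _, _, .base, _, h => h
  | _, _, _, .drop o, _, .snoc h v => isRen_trimOpe o h
  | _, _, _, .keep o, _, .snoc h v => .snoc (isRen_trimOpe o h) v
  | _, _, _, .keepLock o, _, .lock h e => .lock (isRen_trimOpe o h) e

theorem substVar_isRen : ∀ {Γ Δ : Cx} {A : Ty} {σ : Sub Γ Δ}, IsRen σ → ∀ (v : Var Δ A),
    ∃ w, substVar σ v = .var w
  | _, _, _, _, .snoc h v', .zero => ⟨v', by rw [substVar_zero]⟩
  | _, _, _, _, .snoc h v', .succ v => by rw [substVar_succ]; exact substVar_isRen h v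

theorem isRen_trimG : ∀ {Γ Δ Θ : Cx} (g : GExt Θ Δ) {σ : Sub Γ Δ}, IsRen σ →
    IsRen (trimG σ g).2.1
  | _, _, _, .nil, σ, h => by rw [trimG_nil]; exact h
  | _, _, _, .var g, _, .snoc h v => by rw [trimG_var]; exact isRen_trimG g h
  | _, _, _, .lock g, _, .lock h e => by rw [trimG_lock]; exact isRen_trimG g h

/-- Composition with a renaming on the right commutes with weakening. -/
theorem compSub_wkSub_left_ren : ∀ {Γ Γ' Δ Θ : Cx} (o : Ope Γ Γ') (s : Sub Γ Δ) {ρ : Sub Δ Θ},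
    IsRen ρ → compSub (wkSub o s) ρ = wkSub o (compSub s ρ)
  | _, _, _, _, o, s, _, .empty => rfl
  | _, _, _, _, o, s, _, .snoc h v => by
      rw [compSub_snoc, compSub_snoc, wkSub_snoc, compSub_wkSub_left_ren o s h, subst_var,
        subst_var, substVar_wkSub]
  | _, _, _, _, o, s, _, .lock h e => by
      rw [compSub_lock, compSub_lock, trimSub_wkSub o s e,
        compSub_wkSub_left_ren _ _ h, wkSub_lock]

/-- Substitution fusion for an inner renaming. -/
theorem subst_subst_ren : ∀ {Γ Δ Θ : Cx} {A : Ty} (s : Sub Γ Δ) {ρ : Sub Δ Θ} (hρ : IsRen ρ)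
    (t : Tm Θ A), subst s (subst ρ t) = subst (compSub s ρ) t
  | _, _, _, _, s, _, hρ, .var v => by rw [subst_var, subst_var, substVar_compSub]
  | _, _, _, _, s, _, hρ, .lam t => by
      rw [subst_lam, subst_lam, subst_subst_ren _ (.snoc (isRen_wkSub _ hρ) _) t, subst_lam,
        compSub_snoc, subst_var, substVar_zero, compSub_wkSub, trimOpe_drop, trimOpe_id,
        compSub_wkSub_left_ren _ _ hρ]
  | _, _, _, _, s, _, hρ, .app t u => by
      rw [subst_app, subst_app, subst_subst_ren s hρ t, subst_subst_ren s hρ u, subst_app]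
  | _, _, _, _, s, _, hρ, .box t => by
      rw [subst_box, subst_box, subst_subst_ren _ (.lock hρ _) t, subst_box, compSub_lock,
        trimSub_nil]
  | _, _, _, _, s, _, hρ, .unbox t e => by
      rw [subst_unbox, subst_unbox, subst_subst_ren _ (isRen_trimSub e hρ) t, subst_unbox,
        trimSub_compSub]
  | _, _, _, _, s, _, hρ, .tt => by rw [subst_tt, subst_tt, subst_tt]
  | _, _, _, _, s, _, hρ, .ff => by rw [subst_ff, subst_ff, subst_ff]
  | _, _, _, _, s, _, hρ, .ite g b t₁ t₂ => by
      rw [subst_ite, subst_ite, subst_subst_ren _ (isRen_trimG g hρ) b,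
        subst_subst_ren s hρ t₁, subst_subst_ren s hρ t₂, subst_ite, trimG_compSub]

/-- Right identity for composition. -/
theorem compSub_idSub_ren : ∀ {Γ Δ : Cx} {ρ : Sub Γ Δ}, IsRen ρ → compSub (idSub Γ) ρ = ρ
  | _, _, _, .empty => rfl
  | _, _, _, .snoc h v => by
      rw [compSub_snoc, compSub_idSub_ren h, subst_var, substVar_id]
  | _, _, _, .lock h e => by
      rw [compSub_lock, trimSub_id, compSub_idSub_ren h]

theorem compSub_wkSub_idSub_ren {Γ Γ' Δ : Cx} (o : Ope Γ Γ') {ρ : Sub Γ Δ} (hρ : IsRen ρ) :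
    compSub (wkSub o (idSub Γ)) ρ = wkSub o ρ := by
  rw [compSub_wkSub_left_ren o _ hρ, compSub_idSub_ren hρ]
/-! ### Lock-free contexts -/

def Lockfree : Cx → Prop
  | .nil => True
  | .snoc Γ _ => Lockfree Γ
  | .lock _ => False

@[simp] theorem lockfree_nil : Lockfree .nil = True := rfl
@[simp] theorem lockfree_snoc {Γ : Cx} {A : Ty} : Lockfree (.snoc Γ A) = Lockfree Γ := rfl
@[simp] theorem lockfree_lock {Γ : Cx} : Lockfree (.lock Γ) = False := rfl

theorem lockfree_ope : ∀ {Γ Γ' : Cx}, Ope Γ Γ' → Lockfree Γ' → Lockfree Γ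
  | _, _, .base, h => h
  | _, _, .drop o, h => lockfree_ope o (by rwa [lockfree_snoc] at h)
  | _, _, .keep o, h => by
      rw [lockfree_snoc]; exact lockfree_ope o (by rwa [lockfree_snoc] at h)
  | _, _, .keepLock o, h => by rw [lockfree_lock] at h; exact h.elim

theorem lockfree_gext : ∀ {Δ Γ : Cx}, GExt Δ Γ → Lockfree Γ → Lockfree Δ
  | _, _, .nil, h => h
  | _, _, .var _, h => lockfree_gext (by assumption) (by rwa [lockfree_snoc] at h)
  | _, _, .lock _, h => by rw [lockfree_lock] at h; exact h.elim

theorem ext_not_lockfree : ∀ {Δ Γ : Cx}, Ext Δ Γ → ¬ Lockfree Γ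
  | _, _, .nil, h => by rw [lockfree_lock] at h; exact h
  | _, _, .var e, h => ext_not_lockfree e (by rwa [lockfree_snoc] at h)

/-! ### Congruence of substitution for pointwise weakening-stable conversions -/

/-- Conversion stable under all weakenings. -/
def RelW {Γ : Cx} {A : Ty} (t u : Tm Γ A) : Prop :=
  ∀ {Γ' : Cx} (o : Ope Γ Γ'), Conv (wkTm o t) (wkTm o u)

theorem relW_refl {Γ : Cx} {A : Ty} (t : Tm Γ A) : RelW t t := fun _ => .refl _

theorem relW_wk {Γ Γ' : Cx} {A : Ty} {t u : Tm Γ A} (h : RelW t u) (o : Ope Γ Γ') :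
    RelW (wkTm o t) (wkTm o u) := by
  intro Γ'' o'
  rw [wkTm_comp, wkTm_comp]
  exact h _

/-- Pointwise weakening-stable relation on substitutions. -/
inductive SubRel : {Γ Δ : Cx} → Sub Γ Δ → Sub Γ Δ → Prop
  | empty : SubRel .empty .empty
  | snoc {Γ Δ : Cx} {A : Ty} {σ σ' : Sub Γ Δ} {t t' : Tm Γ A} :
      SubRel σ σ' → RelW t t' → SubRel (.snoc σ t) (.snoc σ' t')
  | lock {Γ Δ Θ : Cx} {s s' : Sub Θ Δ} (h : SubRel s s') (e : Ext Θ Γ) :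
      SubRel (.lock s e) (.lock s' e)

theorem subRel_refl : ∀ {Γ Δ : Cx} (σ : Sub Γ Δ), SubRel σ σ
  | _, _, .empty => .empty
  | _, _, .snoc s t => .snoc (subRel_refl s) (relW_refl t)
  | _, _, .lock s e => .lock (subRel_refl s) e

theorem subRel_wkSub : ∀ {Γ Γ' Δ : Cx} (o : Ope Γ Γ') {σ σ' : Sub Γ Δ}, SubRel σ σ' →
    SubRel (wkSub o σ) (wkSub o σ')
  | _, _, _, o, _, _, .empty => .empty
  | _, _, _, o, _, _, .snoc h r => by
      rw [wkSub_snoc, wkSub_snoc]; exact .snoc (subRel_wkSub o h) (relW_wk r o)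
  | _, _, _, o, _, _, .lock h e => by
      rw [wkSub_lock, wkSub_lock]; exact .lock (subRel_wkSub _ h) _

theorem subRel_trimSub : ∀ {Γ Δ Θ : Cx} {σ σ' : Sub Γ Δ} (h : SubRel σ σ') (e : Ext Θ Δ),
    ∃ (Θ' : Cx) (s₀ s₀' : Sub Θ' Θ) (e₀ : Ext Θ' Γ),
      trimSub σ e = ⟨Θ', s₀, e₀⟩ ∧ trimSub σ' e = ⟨Θ', s₀', e₀⟩ ∧ SubRel s₀ s₀'
  | _, _, _, _, _, .lock h e', .nil => ⟨_, _, _, _, by rw [trimSub_nil], by rw [trimSub_nil], h⟩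
  | _, _, _, _, _, .snoc h r, .var e => by
      rw [trimSub_var, trimSub_var]; exact subRel_trimSub h e

theorem subRel_trimG : ∀ {Γ Δ Θ : Cx} {σ σ' : Sub Γ Δ} (h : SubRel σ σ') (g : GExt Θ Δ),
    ∃ (Γ₁ : Cx) (s₀ s₀' : Sub Γ₁ Θ) (g₀ : GExt Γ₁ Γ),
      trimG σ g = ⟨Γ₁, s₀, g₀⟩ ∧ trimG σ' g = ⟨Γ₁, s₀', g₀⟩ ∧ SubRel s₀ s₀'
  | _, _, _, σ, σ', h, .nil => ⟨_, _, _, _, by rw [trimG_nil], by rw [trimG_nil], h⟩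
  | _, _, _, _, _, .snoc h r, .var g => by
      rw [trimG_var, trimG_var]; exact subRel_trimG h g
  | _, _, _, _, _, .lock h e, .lock g => by
      rw [trimG_lock, trimG_lock]
      obtain ⟨Γ₁, s₀, s₀', g₀, e₁, e₂, hr⟩ := subRel_trimG h g
      exact ⟨Γ₁, s₀, s₀', _, by rw [e₁], by rw [e₂], hr⟩

theorem congSubVar : ∀ {Γ Δ : Cx} {A : Ty} (v : Var Δ A) {σ σ' : Sub Γ Δ}, SubRel σ σ' →
    Conv (substVar σ v) (substVar σ' v)
  | _, _, _, .zero, _, _, .snoc h r => by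
      rw [substVar_zero, substVar_zero]
      have := r (idOpe _); rwa [wkTm_id, wkTm_id] at this
  | _, _, _, .succ v, _, _, .snoc h r => by
      rw [substVar_succ, substVar_succ]; exact congSubVar v h

theorem congSub : ∀ {Γ Δ : Cx} {A : Ty} (t : Tm Δ A) {σ σ' : Sub Γ Δ}, SubRel σ σ' →
    Conv (subst σ t) (subst σ' t)
  | _, _, _, .var v, _, _, h => by rw [subst_var, subst_var]; exact congSubVar v h
  | _, _, _, .lam t, _, _, h => by
      rw [subst_lam, subst_lam]
      exact .congLam (congSub t (.snoc (subRel_wkSub _ h) (relW_refl _)))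
  | _, _, _, .app t u, _, _, h => by
      rw [subst_app, subst_app]; exact .congApp (congSub t h) (congSub u h)
  | _, _, _, .box t, _, _, h => by
      rw [subst_box, subst_box]; exact .congBox (congSub t (.lock h _))
  | _, _, _, .unbox t e, _, _, h => by
      obtain ⟨Θ', s₀, s₀', e₀, e₁, e₂, hr⟩ := subRel_trimSub h e
      rw [subst_unbox, subst_unbox, e₁, e₂]
      exact .congUnbox (congSub t hr)
  | _, _, _, .tt, _, _, h => by rw [subst_tt, subst_tt]; exact .refl _
  | _, _, _, .ff, _, _, h => by rw [subst_ff, subst_ff]; exact .refl _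
  | _, _, _, .ite g b t₁ t₂, _, _, h => by
      obtain ⟨Γ₁, s₀, s₀', g₀, e₁, e₂, hr⟩ := subRel_trimG h g
      rw [subst_ite, subst_ite, e₁, e₂]
      exact .congIte (congSub b hr) (congSub t₁ h) (congSub t₂ h)

/-! ### The λ-collapse lemmas -/

theorem beta_keepdrop {Γ : Cx} {A B : Ty} (f : Tm (.snoc Γ A) B) :
    Conv (.app (.lam (wkTm (.keep (.drop (idOpe Γ))) f)) (.var .zero))
      (subst (idSub (.snoc Γ A)) f) := by
  refine .trans (.betaFun _ _) ?_
  rw [subst_wkTm, trimOpe_keep,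
    show idSub (Cx.snoc Γ A) = Sub.snoc (wkSub (.drop (idOpe Γ)) (idSub Γ)) (.var .zero) from rfl,
    trimOpe_drop, trimOpe_id]
  exact .refl _

/-- The (*gen) lemma: an ite with λ-branches is a λ over a var-extended ite. -/
theorem starGen {Γ' Δ : Cx} {A B : Ty} (g : GExt Δ Γ') (s : Tm Δ .bool)
    (f₁ f₂ : Tm (.snoc Γ' A) B) :
    Conv (.ite g s (.lam f₁) (.lam f₂))
      (.lam (.ite (.var g) s (subst (idSub (.snoc Γ' A)) f₁) (subst (idSub (.snoc Γ' A)) f₂))) := by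
  refine .trans (.etaFun _) (.congLam ?_)
  rw [wkTm_ite, factorG_drop, factorG_id]
  dsimp only
  rw [wkTm_id, wkTm_lam, wkTm_lam]
  exact .trans (.iteApp _ _ _ _ _)
    (.congIte (.refl _) (beta_keepdrop f₁) (beta_keepdrop f₂))

/-- Collapse of an ite along the identity substitution. -/
theorem collapse1 {Γ' Δ : Cx} {A B : Ty} (g : GExt Δ Γ') (s : Tm Δ .bool)
    (f₁ f₂ : Tm (.snoc Γ' A) B) (w : Tm Γ' A) :
    Conv
      (.ite (trimG (idSub Γ') g).2.2 (subst (trimG (idSub Γ') g).2.1 s)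
        (subst (.snoc (idSub Γ') w) f₁) (subst (.snoc (idSub Γ') w) f₂))
      (.ite g s (subst (.snoc (idSub Γ') w) f₁) (subst (.snoc (idSub Γ') w) f₂)) := by
  have routeB : Conv (.app (.ite g s (.lam f₁) (.lam f₂)) w)
      (.ite (trimG (idSub Γ') g).2.2 (subst (trimG (idSub Γ') g).2.1 s)
        (subst (.snoc (idSub Γ') w) f₁) (subst (.snoc (idSub Γ') w) f₂)) := by
    refine .trans (.congApp (starGen g s f₁ f₂) (.refl _)) (.trans (.betaFun _ _) ?_)
    rw [subst_ite, trimG_var,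
      subst_subst_ren _ (isRen_idSub _) f₁, subst_subst_ren _ (isRen_idSub _) f₂,
      compSub_idr]
    exact .refl _
  have routeA : Conv (.app (.ite g s (.lam f₁) (.lam f₂)) w)
      (.ite g s (subst (.snoc (idSub Γ') w) f₁) (subst (.snoc (idSub Γ') w) f₂)) :=
    .trans (.iteApp _ _ _ _ _) (.congIte (.refl _) (.betaFun _ _) (.betaFun _ _))
  exact .trans (.symm routeB) routeA

/-- Substitution along the identity substitution is convertible to the identity. -/
theorem subst_id_conv : ∀ {Γ : Cx} {A : Ty} (t : Tm Γ A), Conv (subst (idSub Γ) t) t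
  | _, _, .var v => by rw [subst_var, substVar_id]; exact .refl _
  | _, _, .lam t => by
      rw [subst_lam,
        show Sub.snoc (wkSub (.drop (idOpe _)) (idSub _)) (.var .zero) = idSub _ from rfl]
      exact .congLam (subst_id_conv t)
  | _, _, .app t u => by
      rw [subst_app]; exact .congApp (subst_id_conv t) (subst_id_conv u)
  | _, _, .box t => by
      rw [subst_box, show Sub.lock (idSub _) Ext.nil = idSub _ from rfl]
      exact .congBox (subst_id_conv t)
  | _, _, .unbox t e => by
      rw [subst_unbox, trimSub_id]
      exact .congUnbox (subst_id_conv t)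
  | _, _, .tt => by rw [subst_tt]; exact .refl _
  | _, _, .ff => by rw [subst_ff]; exact .refl _
  | Γ, _, .ite g b t₁ t₂ => by
      rw [subst_ite]
      have step1 := collapse1 g b (wkTm (.drop (idOpe Γ)) t₁) (wkTm (.drop (idOpe Γ)) t₂) .tt
      rw [subst_wkTm, subst_wkTm, trimOpe_drop, trimOpe_id] at step1
      exact .trans step1 (.congIte (.refl _) (subst_id_conv t₁) (subst_id_conv t₂))
/-! ### Conversion-level fusion with renamings -/

theorem wk_subst_ren {Γ Δ : Cx} {ρ : Sub Γ Δ} (hρ : IsRen ρ) {A : Ty} (t : Tm Δ A)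
    {Γ' : Cx} (o : Ope Γ Γ') : Conv (wkTm o (subst ρ t)) (subst (wkSub o ρ) t) := by
  have e1 : subst (wkSub o (idSub Γ)) (subst ρ t) = subst (wkSub o ρ) t := by
    rw [subst_subst_ren _ hρ, compSub_wkSub_idSub_ren o hρ]
  rw [← e1, subst_wkSub_idSub]
  exact .symm (subst_id_conv _)

theorem subRel_comp_wk_ren : ∀ {Γ Γ' Δ Θ : Cx} (w : Ope Γ Γ') {ρ : Sub Γ Δ} (hρ : IsRen ρ)
    (σ : Sub Δ Θ), SubRel (compSub (wkSub w ρ) σ) (wkSub w (compSub ρ σ))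
  | _, _, _, _, w, _, hρ, .empty => .empty
  | _, _, _, _, w, _, hρ, .snoc σ t => by
      rw [compSub_snoc, compSub_snoc, wkSub_snoc]
      refine .snoc (subRel_comp_wk_ren w hρ σ) ?_
      intro Γ'' o'
      have h1 := wk_subst_ren (isRen_wkSub w hρ) t o'
      rw [wkSub_comp] at h1
      have h2 := wk_subst_ren hρ t (comp w o')
      rw [← wkTm_comp] at h2
      exact .trans h1 (.symm h2)
  | _, _, _, _, w, _, hρ, .lock σ e => by
      rw [compSub_lock, compSub_lock, trimSub_wkSub, wkSub_lock]
      exact .lock (subRel_comp_wk_ren _ (isRen_trimSub e hρ) σ) _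

/-- Conversion-level substitution fusion with an outer renaming. -/
theorem subst_ren_subst : ∀ {Γ Δ Θ : Cx} {A : Ty} {ρ : Sub Γ Δ} (hρ : IsRen ρ) (σ : Sub Δ Θ)
    (t : Tm Θ A), Conv (subst ρ (subst σ t)) (subst (compSub ρ σ) t)
  | _, _, _, _, _, hρ, σ, .var v => by
      rw [subst_var, subst_var, substVar_compSub]; exact .refl _
  | _, _, _, _, ρ', hρ, σ, .lam t => by
      rw [subst_lam, subst_lam, subst_lam]
      refine .congLam (.trans (subst_ren_subst (.snoc (isRen_wkSub _ hρ) _) _ t) ?_)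
      rw [compSub_snoc, subst_var, substVar_zero, compSub_wkSub, trimOpe_drop, trimOpe_id]
      exact congSub t (.snoc (subRel_comp_wk_ren _ hρ σ) (relW_refl _))
  | _, _, _, _, _, hρ, σ, .app t u => by
      rw [subst_app, subst_app, subst_app]
      exact .congApp (subst_ren_subst hρ σ t) (subst_ren_subst hρ σ u)
  | _, _, _, _, _, hρ, σ, .box t => by
      rw [subst_box, subst_box, subst_box]
      refine .congBox (.trans (subst_ren_subst (.lock hρ _) _ t) ?_)
      rw [compSub_lock, trimSub_nil]
      exact .refl _
  | _, _, _, _, _, hρ, σ, .unbox t e => by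
      rw [subst_unbox, subst_unbox, subst_unbox, trimSub_compSub]
      exact .congUnbox (subst_ren_subst (isRen_trimSub _ hρ) _ t)
  | _, _, _, _, _, hρ, σ, .tt => by rw [subst_tt, subst_tt, subst_tt]; exact .refl _
  | _, _, _, _, _, hρ, σ, .ff => by rw [subst_ff, subst_ff, subst_ff]; exact .refl _
  | _, _, _, _, _, hρ, σ, .ite g b t₁ t₂ => by
      rw [subst_ite, subst_ite, subst_ite, trimG_compSub]
      exact .congIte (subst_ren_subst (isRen_trimG _ hρ) _ b)
        (subst_ren_subst hρ σ t₁) (subst_ren_subst hρ σ t₂)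

/-! ### Factorizations with variables only, and the iteEta weakening analysis -/

inductive FactV : {Γ Δ' Γ'' : Cx} → Ope Γ Δ' → GExt Δ' Γ'' → Ope Γ Γ'' → Prop
  | base {Γ Δ' : Cx} (o : Ope Γ Δ') : FactV o .nil o
  | step {Γ Δ' Γ'' : Cx} {A : Ty} {o₁ : Ope Γ Δ'} {g : GExt Δ' Γ''} {o : Ope Γ Γ''} :
      FactV o₁ g o → FactV o₁ (.var (A := A) g) (.drop o)

theorem factV_factorG_nil : ∀ {Γ Γ' : Cx} (o : Ope Γ Γ'),
    FactV (factorG (.nil : GExt Γ Γ) o).2.1 (factorG (.nil : GExt Γ Γ) o).2.2 o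
  | _, _, .base => by rw [factorG_nil_base]; exact .base _
  | _, _, .keep o => by rw [factorG_nil_keep]; exact .base _
  | _, _, .keepLock o => by rw [factorG_nil_keepLock]; exact .base _
  | _, _, .drop o => by rw [factorG_drop]; exact .step (factV_factorG_nil o)

theorem tgvf : ∀ {Γ Δ' Γ'' : Cx} {o₁ : Ope Γ Δ'} {g : GExt Δ' Γ''} {o : Ope Γ Γ''},
    FactV o₁ g o → ∀ {Γ₂ : Cx} (w : Ope Γ'' Γ₂),
    ∃ (W : Ope Δ' Γ₂), trimG (wkSub w (idSub Γ'')) g = ⟨Γ₂, wkSub W (idSub Δ'), .nil⟩ ∧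
      comp o₁ W = comp o w
  | _, _, _, _, _, _, .base o, _, w => ⟨w, by rw [trimG_nil], rfl⟩
  | _, _, _, _, _, _, .step h, _, w => by
      rw [show idSub _ = Sub.snoc (wkSub (.drop (idOpe _)) (idSub _)) (.var .zero) from rfl,
        wkSub_snoc, trimG_var, wkSub_comp]
      obtain ⟨W, h1, h2⟩ := tgvf h (comp (.drop (idOpe _)) w)
      refine ⟨W, h1, ?_⟩
      rw [h2, ← comp_assoc, comp_drop, comp_idr]

/-- Double weakened-identity substitutions compose. -/
theorem wwcomp {Γ Δ' Γ₂ : Cx} (o₁ : Ope Γ Δ') (W : Ope Δ' Γ₂) {A : Ty} (s : Tm Γ A) :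
    subst (wkSub W (idSub Δ')) (subst (wkSub o₁ (idSub Γ)) s) =
      subst (wkSub (comp o₁ W) (idSub Γ)) s := by
  rw [subst_subst_ren _ (isRen_wkSub _ (isRen_idSub _)), compSub_wkSub, compSub_idr,
    trimOpe_wkSub, trimOpe_idSub, wkSub_comp]

theorem conv_app_lam_tt {Γ : Cx} {A : Ty} (u : Tm Γ A) :
    Conv (.app (.lam .tt) u) (.tt : Tm Γ .bool) := by
  have h := Conv.betaFun (.tt : Tm (.snoc Γ A) .bool) u
  rwa [subst_tt] at h

theorem conv_app_lam_ff {Γ : Cx} {A : Ty} (u : Tm Γ A) :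
    Conv (.app (.lam .ff) u) (.ff : Tm Γ .bool) := by
  have h := Conv.betaFun (.ff : Tm (.snoc Γ A) .bool) u
  rwa [subst_ff] at h

/-- (*tt): special case of starGen with boolean-constant branches. -/
theorem starTT {Γ' Δ : Cx} {A : Ty} (g : GExt Δ Γ') (s : Tm Δ .bool) :
    Conv (.ite g s (.lam (.tt : Tm (.snoc Γ' A) .bool)) (.lam .ff))
      (.lam (.ite (.var g) s .tt .ff)) := by
  have h := starGen (A := A) g s .tt .ff
  rwa [subst_tt, subst_ff] at h

/-- Main lemma for the iteEta case of weakening-stability. -/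
theorem itsG : ∀ {Γ Δ' Γ'' : Cx} {o₁ : Ope Γ Δ'} {g : GExt Δ' Γ''} {o : Ope Γ Γ''},
    FactV o₁ g o → ∀ (s : Tm Γ .bool),
    Conv (.ite g (subst (wkSub o₁ (idSub Γ)) s) .tt .ff) (subst (wkSub o (idSub Γ)) s)
  | _, _, _, _, _, _, .base o, s => .symm (.iteEta _)
  | Γ, Δ', _, o₁, _, _, .step (g := g') (o := o₀) (A := A) h, s => by
    set Y := subst (wkSub o₁ (idSub Γ)) s with hY
    have routeA : Conv (.app (.lam (.ite (.var (.var g')) Y .tt .ff)) (.var (.zero)))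
        (.ite (.var (A := A) g') Y .tt .ff) := by
      refine .trans (.congApp (.symm (starTT (.var g') Y)) (.refl _)) ?_
      exact .trans (.iteApp _ _ _ _ _)
        (.congIte (.refl _) (conv_app_lam_tt _) (conv_app_lam_ff _))
    have routeB : Conv (.app (.lam (.ite (.var (.var g')) Y .tt .ff)) (.var (.zero)))
        (subst (wkSub (.drop (A := A) o₀) (idSub Γ)) s) := by
      refine .trans (.betaFun _ _) ?_
      rw [subst_ite, subst_tt, subst_ff,
        show idSub _ = Sub.snoc (wkSub (.drop (idOpe _)) (idSub _)) (.var .zero) from rfl,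
        trimG_var, trimG_var]
      obtain ⟨W, h1, h2⟩ := tgvf h (.drop (idOpe _))
      rw [h1]
      dsimp only
      refine .trans (.symm (.iteEta _)) ?_
      rw [hY, wwcomp, h2, comp_drop, comp_idr]
      exact .refl _
    exact .trans (.symm routeA) routeB

/-- Weakening-stability of the boolean η rule. -/
theorem wkIteEta {Γ Γ' : Cx} (o : Ope Γ Γ') (s : Tm Γ .bool) :
    Conv (wkTm o s) (wkTm o (.ite .nil s .tt .ff)) := by
  rw [wkTm_ite, wkTm_tt, wkTm_ff]
  have hits := itsG (factV_factorG_nil o) s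
  have scr : Conv (subst (wkSub (factorG (.nil : GExt Γ Γ) o).2.1 (idSub Γ)) s)
      (wkTm (factorG (.nil : GExt Γ Γ) o).2.1 s) := by
    rw [subst_wkSub_idSub]; exact subst_id_conv _
  refine .trans ?_ (.trans (.symm hits) (.congIte scr (.refl _) (.refl _)))
  rw [subst_wkSub_idSub]
  exact .symm (subst_id_conv _)

/-- Coherence of factorOpe with factorization. -/
theorem factorOpe_comp : ∀ {Δ Γ Γ' : Cx} (e : Ext Δ Γ) (o : Ope Γ Γ'),
    comp (factorOpe e) o = comp (.keepLock (factor e o).2.1) (factorOpe (factor e o).2.2)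
  | _, _, _, e, .drop o => by
      rw [factor_drop, comp_drop, factorOpe_comp e o]
      dsimp only
      rw [show factorOpe (Ext.var (factor e o).2.2) = .drop (factorOpe (factor e o).2.2) from
        (by simp [factorOpe]), comp_drop]
  | _, _, _, .var e, .keep o => by
      rw [factor_var_keep,
        show factorOpe (Ext.var e) = .drop (factorOpe e) from (by simp [factorOpe]),
        comp_drop_keep, factorOpe_comp e o]
      dsimp only
      rw [show factorOpe (Ext.var (factor e o).2.2) = .drop (factorOpe (factor e o).2.2) from
        (by simp [factorOpe]), comp_drop]
  | _, _, _, .nil, .keepLock o => by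
      rw [factor_nil_keepLock,
        show factorOpe (Ext.nil (Γ := _)) = .keepLock (idOpe _) from (by simp [factorOpe, idOpe]),
        show factorOpe (Ext.nil (Γ := _)) = .keepLock (idOpe _) from (by simp [factorOpe, idOpe]),
        comp_keepLock, comp_keepLock, comp_idl, comp_idr]

/-- Conversion is stable under weakening. -/
theorem wkConv {Γ : Cx} {A : Ty} {t u : Tm Γ A} (h : Conv t u) :
    ∀ {Γ' : Cx} (o : Ope Γ Γ'), Conv (wkTm o t) (wkTm o u) := by
  induction h with
  | refl t => exact fun o => .refl _
  | symm _ ih => exact fun o => .symm (ih o)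
  | trans _ _ ih₁ ih₂ => exact fun o => .trans (ih₁ o) (ih₂ o)
  | congLam _ ih =>
      intro Γ' o; rw [wkTm_lam, wkTm_lam]; exact .congLam (ih _)
  | congApp _ _ ih₁ ih₂ =>
      intro Γ' o; rw [wkTm_app, wkTm_app]; exact .congApp (ih₁ o) (ih₂ o)
  | congBox _ ih =>
      intro Γ' o; rw [wkTm_box, wkTm_box]; exact .congBox (ih _)
  | congUnbox _ ih =>
      intro Γ' o; rw [wkTm_unbox, wkTm_unbox]; exact .congUnbox (ih _)
  | congIte _ _ _ ih ih₁ ih₂ =>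
      intro Γ' o; rw [wkTm_ite, wkTm_ite]; exact .congIte (ih _) (ih₁ o) (ih₂ o)
  | betaFun t u =>
      intro Γ' o
      rename_i Γ₀ A₀ B₀
      rw [wkTm_app, wkTm_lam]
      refine .trans (.betaFun _ _) ?_
      rw [subst_wkTm, trimOpe_keep, trimOpe_idSub]
      have hA : Conv (subst (wkSub o (idSub Γ₀)) (subst (.snoc (idSub Γ₀) u) t))
          (wkTm o (subst (.snoc (idSub Γ₀) u) t)) := by
        rw [subst_wkSub_idSub]; exact subst_id_conv _
      have key := subst_ren_subst (isRen_wkSub o (isRen_idSub Γ₀)) (.snoc (idSub Γ₀) u) t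
      rw [compSub_snoc, compSub_idr, subst_wkSub_idSub o u] at key
      refine .trans ?_ (.trans (.symm key) hA)
      refine congSub t (.snoc (subRel_refl _) ?_)
      intro Γ'' o'
      have h1 := wk_subst_ren (isRen_idSub _) (wkTm o u) o'
      rw [subst_wkSub_idSub] at h1
      exact .symm (.trans h1 (subst_id_conv _))
  | etaFun t =>
      intro Γ' o
      rw [wkTm_lam, wkTm_app, wkTm_var, wkVar_keep_zero, wkTm_comp, comp_drop_keep, comp_idl,
        show Ope.drop (A := _) o = comp o (.drop (idOpe _)) from (by rw [comp_drop, comp_idr]),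
        ← wkTm_comp]
      exact .etaFun _
  | betaBox t e =>
      intro Γ' o
      rw [wkTm_unbox, wkTm_box, wkTm_comp, factorOpe_comp, ← wkTm_comp]
      exact .betaBox _ _
  | etaBox t =>
      intro Γ' o
      rw [wkTm_box, wkTm_unbox, factor_nil_keepLock]
      exact .etaBox _
  | iteTrue g t₁ t₂ =>
      intro Γ' o; rw [wkTm_ite, wkTm_tt]; exact .iteTrue _ _ _
  | iteFalse g t₁ t₂ =>
      intro Γ' o; rw [wkTm_ite, wkTm_ff]; exact .iteFalse _ _ _
  | iteEta t => exact fun o => wkIteEta o t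
  | iteUnbox g b t₁ t₂ e =>
      intro Γ' o
      rw [wkTm_unbox, wkTm_ite, wkTm_ite, factorG_transG, wkTm_unbox, wkTm_unbox]
      exact .iteUnbox _ _ _ _ _
  | iteApp g b t₁ t₂ u =>
      intro Γ' o
      rw [wkTm_app, wkTm_ite, wkTm_ite, wkTm_app, wkTm_app]
      exact .iteApp _ _ _ _ _
/-! ### General conversion-level fusion -/

theorem subRel_collapse : ∀ {Γ Γ' Δ : Cx} (o : Ope Γ Γ') (σ : Sub Γ Δ),
    SubRel (compSub (wkSub o (idSub Γ)) σ) (wkSub o σ)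
  | _, _, _, o, .empty => .empty
  | Γ, _, _, o, .snoc σ t => by
      rw [compSub_snoc, wkSub_snoc]
      refine .snoc (subRel_collapse o σ) ?_
      intro Γ'' o'
      refine .trans (wk_subst_ren (isRen_wkSub o (isRen_idSub Γ)) t o') ?_
      rw [wkSub_comp, subst_wkSub_idSub, wkTm_comp]
      exact subst_id_conv _
  | _, _, _, o, .lock s e => by
      rw [compSub_lock, wkSub_lock, trimSub_wkSub, trimSub_id]
      exact .lock (subRel_collapse _ s) _

/-- Weakening after substitution, up to conversion. -/
theorem wk_subst {Γ Δ : Cx} (σ : Sub Γ Δ) {A : Ty} (t : Tm Δ A) {Γ' : Cx} (o : Ope Γ Γ') :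
    Conv (wkTm o (subst σ t)) (subst (wkSub o σ) t) := by
  have key := subst_ren_subst (isRen_wkSub o (isRen_idSub Γ)) σ t
  rw [subst_wkSub_idSub] at key
  exact .trans (.symm (subst_id_conv _)) (.trans key (congSub t (subRel_collapse o σ)))

theorem subRel_comp_wk : ∀ {Γ Γ' Δ Θ : Cx} (w : Ope Γ Γ') (s : Sub Γ Δ) (σ : Sub Δ Θ),
    SubRel (compSub (wkSub w s) σ) (wkSub w (compSub s σ))
  | _, _, _, _, w, s, .empty => .empty
  | _, _, _, _, w, s, .snoc σ t => by
      rw [compSub_snoc, compSub_snoc, wkSub_snoc]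
      refine .snoc (subRel_comp_wk w s σ) ?_
      intro Γ'' o'
      have h1 := wk_subst (wkSub w s) t o'
      rw [wkSub_comp] at h1
      have h2 := wk_subst s t (comp w o')
      rw [← wkTm_comp] at h2
      exact .trans h1 (.symm h2)
  | _, _, _, _, w, s, .lock σ e => by
      rw [compSub_lock, compSub_lock, trimSub_wkSub, wkSub_lock]
      exact .lock (subRel_comp_wk _ _ σ) _

/-- Conversion-level substitution fusion, in general. -/
theorem subst_subst_conv : ∀ {Γ Δ Θ : Cx} {A : Ty} (s : Sub Γ Δ) (σ : Sub Δ Θ)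
    (t : Tm Θ A), Conv (subst s (subst σ t)) (subst (compSub s σ) t)
  | _, _, _, _, s, σ, .var v => by
      rw [subst_var, subst_var, substVar_compSub]; exact .refl _
  | _, _, _, _, s, σ, .lam t => by
      rw [subst_lam, subst_lam, subst_lam]
      refine .congLam (.trans (subst_subst_conv _ _ t) ?_)
      rw [compSub_snoc, subst_var, substVar_zero, compSub_wkSub, trimOpe_drop, trimOpe_id]
      exact congSub t (.snoc (subRel_comp_wk _ s σ) (relW_refl _))
  | _, _, _, _, s, σ, .app t u => by
      rw [subst_app, subst_app, subst_app]
      exact .congApp (subst_subst_conv s σ t) (subst_subst_conv s σ u)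
  | _, _, _, _, s, σ, .box t => by
      rw [subst_box, subst_box, subst_box]
      refine .congBox (.trans (subst_subst_conv _ _ t) ?_)
      rw [compSub_lock, trimSub_nil]
      exact .refl _
  | _, _, _, _, s, σ, .unbox t e => by
      rw [subst_unbox, subst_unbox, subst_unbox, trimSub_compSub]
      exact .congUnbox (subst_subst_conv _ _ t)
  | _, _, _, _, s, σ, .tt => by rw [subst_tt, subst_tt, subst_tt]; exact .refl _
  | _, _, _, _, s, σ, .ff => by rw [subst_ff, subst_ff, subst_ff]; exact .refl _
  | _, _, _, _, s, σ, .ite g b t₁ t₂ => by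
      rw [subst_ite, subst_ite, subst_ite, trimG_compSub]
      exact .congIte (subst_subst_conv _ _ b)
        (subst_subst_conv s σ t₁) (subst_subst_conv s σ t₂)
/-! ### The binary logical relation and the fundamental lemma -/

@[reducible] def R : (Γ : Cx) → (A : Ty) → Tm Γ A → Tm Γ A → Prop
  | Γ, .base, t, u => Lockfree Γ → Conv t u
  | Γ, .bool, t, u => Lockfree Γ → Conv t u
  | Γ, .arr A B, t, u => ∀ {Γ' : Cx} (o : Ope Γ Γ') (a b : Tm Γ' A), R Γ' A a b →
      R Γ' B (.app (wkTm o t) a) (.app (wkTm o u) b)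
  | _, .box _, _, _ => True

theorem R_base {Γ : Cx} {t u : Tm Γ .base} : R Γ .base t u = (Lockfree Γ → Conv t u) := by
  simp [R]
theorem R_bool {Γ : Cx} {t u : Tm Γ .bool} : R Γ .bool t u = (Lockfree Γ → Conv t u) := by
  simp [R]
theorem R_arr {Γ : Cx} {A B : Ty} {t u : Tm Γ (.arr A B)} :
    R Γ (.arr A B) t u = ∀ {Γ' : Cx} (o : Ope Γ Γ') (a b : Tm Γ' A), R Γ' A a b →
      R Γ' B (.app (wkTm o t) a) (.app (wkTm o u) b) := by simp [R]
theorem R_box {Γ : Cx} {A : Ty} {t u : Tm Γ (.box A)} : R Γ (.box A) t u := by simp [R]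

theorem rLockful : ∀ (A : Ty) {Γ : Cx} (h : ¬ Lockfree Γ) (t u : Tm Γ A), R Γ A t u
  | .base, _, h, t, u => fun lf => absurd lf h
  | .bool, _, h, t, u => fun lf => absurd lf h
  | .arr A B, _, h, t, u => fun o a b _ => rLockful B (fun lf => h (lockfree_ope o lf)) _ _
  | .box A, _, h, t, u => R_box

theorem rMono : ∀ (A : Ty) {Γ Γ' : Cx} {t u : Tm Γ A}, R Γ A t u → ∀ (o : Ope Γ Γ'),
    R Γ' A (wkTm o t) (wkTm o u)
  | .base, _, _, t, u, h, o => fun lf => wkConv (h (lockfree_ope o lf)) o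
  | .bool, _, _, t, u, h, o => fun lf => wkConv (h (lockfree_ope o lf)) o
  | .arr A B, _, _, t, u, h, o => by
      intro o' a b hab
      rw [wkTm_comp, wkTm_comp]
      exact h (comp o o') a b hab
  | .box A, _, _, t, u, h, o => R_box

theorem rConvL : ∀ (A : Ty) {Γ : Cx} {t t' u : Tm Γ A}, Conv t t' → R Γ A t u → R Γ A t' u
  | .base, _, t, t', u, c, h => fun lf => .trans (.symm c) (h lf)
  | .bool, _, t, t', u, c, h => fun lf => .trans (.symm c) (h lf)
  | .arr A B, _, t, t', u, c, h => by
      intro o a b hab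
      exact rConvL B (.congApp (wkConv c o) (.refl a)) (h o a b hab)
  | .box A, _, t, t', u, c, h => R_box

theorem rConvR : ∀ (A : Ty) {Γ : Cx} {t u u' : Tm Γ A}, Conv u u' → R Γ A t u → R Γ A t u'
  | .base, _, t, u, u', c, h => fun lf => .trans (h lf) c
  | .bool, _, t, u, u', c, h => fun lf => .trans (h lf) c
  | .arr A B, _, t, u, u', c, h => by
      intro o a b hab
      exact rConvR B (.congApp (wkConv c o) (.refl b)) (h o a b hab)
  | .box A, _, t, u, u', c, h => R_box

theorem rIte : ∀ (A : Ty) {Γ₀ Γ : Cx} (g : GExt Γ₀ Γ) {b b' : Tm Γ₀ .bool} {t₁ t₁' t₂ t₂' : Tm Γ A},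
    R Γ₀ .bool b b' → R Γ A t₁ t₁' → R Γ A t₂ t₂' →
    R Γ A (.ite g b t₁ t₂) (.ite g b' t₁' t₂')
  | .base, _, _, g, b, b', t₁, t₁', t₂, t₂', hb, h₁, h₂ =>
      fun lf => .congIte (hb (lockfree_gext g lf)) (h₁ lf) (h₂ lf)
  | .bool, _, _, g, b, b', t₁, t₁', t₂, t₂', hb, h₁, h₂ =>
      fun lf => .congIte (hb (lockfree_gext g lf)) (h₁ lf) (h₂ lf)
  | .arr A B, _, _, g, b, b', t₁, t₁', t₂, t₂', hb, h₁, h₂ => by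
      intro o a c hac
      rw [wkTm_ite, wkTm_ite]
      refine rConvL B (.symm (.iteApp _ _ _ _ _)) (rConvR B (.symm (.iteApp _ _ _ _ _)) ?_)
      exact rIte B _ (rMono .bool hb _) (h₁ o a c hac) (h₂ o a c hac)
  | .box A, _, _, g, b, b', t₁, t₁', t₂, t₂', hb, h₁, h₂ => R_box

/-- The relation on substitutions. -/
inductive SubR : {Γ Δ : Cx} → Sub Γ Δ → Sub Γ Δ → Prop
  | empty {Γ : Cx} : SubR (Γ := Γ) .empty .empty
  | snoc {Γ Δ : Cx} {A : Ty} {σ τ : Sub Γ Δ} {t u : Tm Γ A} :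
      SubR σ τ → R Γ A t u → SubR (.snoc σ t) (.snoc τ u)
  | lock {Γ Δ Θ : Cx} {s t : Sub Θ Δ} (h : SubR s t) (e : Ext Θ Γ) :
      SubR (.lock s e) (.lock t e)

theorem rsCompW {Γ Δ : Cx} {σ τ : Sub Γ Δ} (h : SubR σ τ) :
    ∀ {Γ' : Cx} (o : Ope Γ Γ'),
      SubR (compSub (wkSub o (idSub Γ)) σ) (compSub (wkSub o (idSub Γ)) τ) := by
  induction h with
  | empty => intro Γ' o; rw [compSub_empty]; exact .empty
  | snoc hst r ih =>
      intro Γ' o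
      rw [compSub_snoc, compSub_snoc]
      refine .snoc (ih o) ?_
      rw [subst_wkSub_idSub, subst_wkSub_idSub]
      exact rConvR _ (.symm (subst_id_conv _))
        (rConvL _ (.symm (subst_id_conv _)) (rMono _ r o))
  | lock hst e ih =>
      intro Γ' o
      rw [compSub_lock, compSub_lock, trimSub_wkSub, trimSub_id]
      exact .lock (ih _) _

theorem rsTrimG : ∀ {Γ Δ Θ : Cx} {σ τ : Sub Γ Δ} (h : SubR σ τ) (g : GExt Θ Δ),
    ∃ (Γ₁ : Cx) (σ₁ τ₁ : Sub Γ₁ Θ) (g₁ : GExt Γ₁ Γ),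
      trimG σ g = ⟨Γ₁, σ₁, g₁⟩ ∧ trimG τ g = ⟨Γ₁, τ₁, g₁⟩ ∧ SubR σ₁ τ₁
  | _, _, _, σ, τ, h, .nil => ⟨_, _, _, _, by rw [trimG_nil], by rw [trimG_nil], h⟩
  | _, _, _, _, _, .snoc h r, .var g => by
      rw [trimG_var, trimG_var]; exact rsTrimG h g
  | _, _, _, _, _, .lock h e, .lock g => by
      rw [trimG_lock, trimG_lock]
      obtain ⟨Γ₁, σ₁, τ₁, g₁, e₁, e₂, hr⟩ := rsTrimG h g
      exact ⟨Γ₁, σ₁, τ₁, _, by rw [e₁], by rw [e₂], hr⟩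

theorem flVar : ∀ {Γ Δ : Cx} {A : Ty} (v : Var Δ A) {σ τ : Sub Γ Δ}, SubR σ τ →
    R Γ A (substVar σ v) (substVar τ v)
  | _, _, _, .zero, _, _, .snoc h r => by rw [substVar_zero, substVar_zero]; exact r
  | _, _, _, .succ v, _, _, .snoc h r => by
      rw [substVar_succ, substVar_succ]; exact flVar v h

/-- The fundamental lemma. -/
theorem fl : ∀ {Δ : Cx} {A : Ty} (t : Tm Δ A) {Γ : Cx} {σ τ : Sub Γ Δ}, SubR σ τ →
    R Γ A (subst σ t) (subst τ t)
  | _, _, .var v, _, σ, τ, h => by rw [subst_var, subst_var]; exact flVar v h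
  | Δ, _, .lam t, Γ, σ, τ, h => by
      rw [subst_lam, subst_lam]
      intro o a b hab
      rename_i Γ'
      have chain : ∀ (υ : Sub Γ Δ) (c : Tm Γ' _),
          Conv (.app (wkTm o (.lam (subst (.snoc (wkSub (.drop (idOpe Γ)) υ) (.var .zero)) t))) c)
            (subst (.snoc (compSub (wkSub o (idSub Γ)) υ) c) t) := by
        intro υ c
        rw [wkTm_lam]
        refine .trans (.betaFun _ _) ?_
        rw [subst_wkTm, trimOpe_keep, trimOpe_idSub]
        have h2 := subst_subst_conv (.snoc (wkSub o (idSub Γ)) c)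
          (.snoc (wkSub (.drop (idOpe Γ)) υ) (.var .zero)) t
        rw [compSub_snoc, subst_var, substVar_zero, compSub_wkSub, trimOpe_drop,
          trimOpe_id] at h2
        exact h2
      have ih := fl t (SubR.snoc (rsCompW h o) hab)
      exact rConvL _ (.symm (chain σ a)) (rConvR _ (.symm (chain τ b)) ih)
  | _, _, .app t u, Γ, σ, τ, h => by
      rw [subst_app, subst_app]
      have r₃ := fl t h (idOpe Γ) _ _ (fl u h)
      rwa [wkTm_id, wkTm_id] at r₃
  | _, _, .box t, _, σ, τ, h => R_box
  | _, _, .unbox t e, _, σ, τ, h =>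
      rLockful _ (ext_not_lockfree (trimSub σ e).2.2) _ _
  | _, _, .tt, _, σ, τ, h => by
      rw [subst_tt, subst_tt]; exact fun _ => .refl _
  | _, _, .ff, _, σ, τ, h => by
      rw [subst_ff, subst_ff]; exact fun _ => .refl _
  | _, _, .ite g b t₁ t₂, _, σ, τ, h => by
      obtain ⟨Γ₁, σ₁, τ₁, g₁, e₁, e₂, hr⟩ := rsTrimG h g
      rw [subst_ite, subst_ite, e₁, e₂]
      exact rIte _ g₁ (fl b hr) (fl t₁ h) (fl t₂ h)
/-- Noninterference for IKC^Bool: for every closed term f : □Bool ⟶ Bool and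
any two closed secrets s₁, s₂ : □Bool, app(f, s₁) ≈ app(f, s₂). -/
theorem noninterference (f : Tm .nil (.arr (.box .bool) .bool))
    (s₁ s₂ : Tm .nil (.box .bool)) : Conv (.app f s₁) (.app f s₂) := by
  have hf : R .nil (.arr (.box .bool) .bool) (subst .empty f) (subst .empty f) :=
    fl f (SubR.empty (Γ := .nil))
  have hid : (idSub .nil) = (.empty : Sub .nil .nil) := by simp [idSub]
  have hc : Conv (subst (.empty : Sub .nil .nil) f) f := by
    rw [← hid]; exact subst_id_conv f
  have hf2 : R .nil (.arr (.box .bool) .bool) f f := rConvR _ hc (rConvL _ hc hf)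
  have happ : R .nil .bool (.app (wkTm (idOpe .nil) f) s₁) (.app (wkTm (idOpe .nil) f) s₂) :=
    hf2 (idOpe .nil) s₁ s₂ R_box
  have c1 : Conv (.app (wkTm (idOpe .nil) f) s₁) (.app f s₁) := by
    rw [wkTm_id]; exact .refl _
  have c2 : Conv (.app (wkTm (idOpe .nil) f) s₂) (.app f s₂) := by
    rw [wkTm_id]; exact .refl _
  exact (rConvR _ c2 (rConvL _ c1 happ)) (by simp [Lockfree])

end IKC
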